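/- arXiv:2107.09902 — 7 statements merged into one kernel-verified Lean document; each statement's English description precedes it below -/
import Mathlib

section
/- The generalized covering radius is subadditive: for any linear [n,k]_q code C and any t₁, t₂ ∈ ℕ, R_{t₁+t₂}(C) ≤ R_{t₁}(C) + R_{t₂}(C). In particular, R_t(C) ≤ t·R_1(C) for all t. -/
open Classical in
noncomputable def tWeight {ι F : Type*} [Fintype ι] [Zero F] {t : ℕ} (v : Fin t → ι → F) : ℕ :=
  (Finset.univ.filter fun j : ι => ∃ i, v i j ≠ (0 : F)).card

noncomputable def genCovDist {ι F : Type*} [Fintype ι] [AddGroup F] {t : ℕ} (v c : Fin t → ι → F) : ℕ :=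
  tWeight (v - c)

noncomputable def genCovRadius {ι F : Type*} [Fintype ι] [AddGroup F] (C : Set (ι → F)) (t : ℕ) : ℕ :=
  sInf {r : ℕ | ∀ v : Fin t → ι → F, ∃ c : Fin t → ι → F, (∀ i, c i ∈ C) ∧ genCovDist v c ≤ r}

def RM (r m : ℕ) : Set ((Fin m → ZMod 2) → ZMod 2) :=
  {f | ∃ p : MvPolynomial (Fin m) (ZMod 2), p.totalDegree ≤ r ∧ ∀ x, MvPolynomial.eval x p = f x}

open Classical

lemma Sne {F : Type} [Field F] {n : ℕ} (C : Submodule F (Fin n → F)) (t : ℕ) :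
    {r : ℕ | ∀ v : Fin t → Fin n → F, ∃ c : Fin t → Fin n → F,
      (∀ i, c i ∈ (C : Set (Fin n → F))) ∧ genCovDist v c ≤ r}.Nonempty := by
  refine ⟨n, fun v => ⟨0, fun i => C.zero_mem, ?_⟩⟩
  calc genCovDist v 0 ≤ (Finset.univ : Finset (Fin n)).card := by unfold genCovDist tWeight; exact Finset.card_le_card (Finset.filter_subset _ _)
    _ = n := by simp

lemma subadd {F : Type} [Field F] {n : ℕ} (C : Submodule F (Fin n → F)) (t₁ t₂ : ℕ) :
    genCovRadius (C : Set (Fin n → F)) (t₁ + t₂)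
      ≤ genCovRadius (C : Set (Fin n → F)) t₁ + genCovRadius (C : Set (Fin n → F)) t₂ := by
  have h₁ := Nat.sInf_mem (Sne C t₁)
  have h₂ := Nat.sInf_mem (Sne C t₂)
  refine Nat.sInf_le ?_
  intro v
  obtain ⟨c₁, hc₁, hd₁⟩ := h₁ (fun i => v (Fin.castAdd t₂ i))
  obtain ⟨c₂, hc₂, hd₂⟩ := h₂ (fun i => v (Fin.natAdd t₁ i))
  refine ⟨Fin.append c₁ c₂, ?_, ?_⟩
  · intro i
    refine Fin.addCases (fun i => ?_) (fun i => ?_) i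
    · rw [Fin.append_left]; exact hc₁ i
    · rw [Fin.append_right]; exact hc₂ i
  · unfold genCovDist tWeight at *
    calc (Finset.univ.filter fun j : Fin n =>
            ∃ i, (v - Fin.append c₁ c₂) i j ≠ (0 : F)).card
        ≤ ((Finset.univ.filter fun j : Fin n =>
            ∃ i, ((fun i => v (Fin.castAdd t₂ i)) - c₁) i j ≠ (0 : F)) ∪
           (Finset.univ.filter fun j : Fin n =>
            ∃ i, ((fun i => v (Fin.natAdd t₁ i)) - c₂) i j ≠ (0 : F))).card := by
          refine Finset.card_le_card ?_
          intro j hj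
          simp only [Finset.mem_filter, Finset.mem_union, Finset.mem_univ, true_and,
            Pi.sub_apply] at *
          obtain ⟨i, hi⟩ := hj
          refine Fin.addCases (fun i hi => ?_) (fun i hi => ?_) i hi
          · left; exact ⟨i, by rwa [Fin.append_left] at hi⟩
          · right; exact ⟨i, by rwa [Fin.append_right] at hi⟩
      _ ≤ _ := le_trans (Finset.card_union_le _ _) (add_le_add hd₁ hd₂)

/-- subadditivity of the generalized covering radius:
R_{t₁+t₂}(C) ≤ R_{t₁}(C) + R_{t₂}(C), and in particular R_t(C) ≤ t·R_1(C). -/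
theorem stmt2 (q n k : ℕ) (F : Type) [Field F] [Fintype F] (hq : Fintype.card F = q)
    (C : Submodule F (Fin n → F)) (hdim : Module.finrank F ↥C = k) (t₁ t₂ : ℕ) :
    genCovRadius (C : Set (Fin n → F)) (t₁ + t₂)
      ≤ genCovRadius (C : Set (Fin n → F)) t₁ + genCovRadius (C : Set (Fin n → F)) t₂ ∧
    ∀ t : ℕ, genCovRadius (C : Set (Fin n → F)) t ≤ t * genCovRadius (C : Set (Fin n → F)) 1 := by
  constructor
  · exact subadd C t₁ t₂
  · intro t
    induction t with
    | zero =>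
      simp only [Nat.zero_mul, Nat.le_zero]
      refine Nat.sInf_eq_zero.2 (Or.inl ?_)
      intro v
      exact ⟨0, fun i => C.zero_mem, by simp [genCovDist, tWeight, Finset.filter_eq_empty_iff]⟩
    | succ t ih =>
      calc genCovRadius (C : Set (Fin n → F)) (t + 1)
          ≤ genCovRadius (C : Set (Fin n → F)) t + genCovRadius (C : Set (Fin n → F)) 1 :=
            subadd C t 1
        _ ≤ t * genCovRadius (C : Set (Fin n → F)) 1 + genCovRadius (C : Set (Fin n → F)) 1 :=
            Nat.add_le_add_right ih _
        _ = (t + 1) * genCovRadius (C : Set (Fin n → F)) 1 := by ring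
end

section
/- For all m, t ∈ ℕ, the t-th generalized covering radius of the binary repetition code of length 2^m (the Reed-Muller code RM(0,m)) equals 2^m − ⌈2^{m−t}⌉. -/
open Classical

lemma mem_RM0_iff {m : ℕ} (f : (Fin m → ZMod 2) → ZMod 2) :
    f ∈ RM 0 m ↔ ∃ a, ∀ x, f x = a := by
  constructor
  · rintro ⟨p, hp, he⟩
    have h0 : p.totalDegree = 0 := Nat.le_zero.mp hp
    refine ⟨∑ mm ∈ p.support, p.coeff mm, fun x => ?_⟩
    rw [← he x, MvPolynomial.eval_eq]
    refine Finset.sum_congr rfl fun mm hmm => ?_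
    have hmm0 : mm = (0 : (Fin m →₀ ℕ)) := by
      ext y
      exact ((MvPolynomial.totalDegree_eq_zero_iff _ p).mp h0) mm hmm y
    subst hmm0
    simp
  · rintro ⟨a, ha⟩
    exact ⟨MvPolynomial.C a, by simp [MvPolynomial.totalDegree_C], fun x => by simp [ha x]⟩

lemma tWeight_eq {ι F : Type*} [Fintype ι] [Zero F] {t : ℕ} (w : Fin t → ι → F) :
    tWeight w = Fintype.card ι - (Finset.univ.filter fun j : ι => ∀ i, w i j = 0).card := by
  unfold tWeight
  have h : (Finset.univ.filter fun j : ι => ∀ i, w i j = 0)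
      = (Finset.univ.filter fun j : ι => ∃ i, w i j ≠ (0 : F))ᶜ := by
    ext j; simp
  rw [h, Finset.card_compl, Nat.sub_sub_self]
  exact Finset.card_le_univ _

lemma genCovDist_const {ι : Type*} [Fintype ι] {t : ℕ} (v : Fin t → ι → ZMod 2)
    (b : Fin t → ZMod 2) (col : ι → (Fin t → ZMod 2)) (hcol : ∀ j i, col j i = v i j) :
    genCovDist v (fun i _ => b i) =
      Fintype.card ι - (Finset.univ.filter fun j : ι => col j = b).card := by
  unfold genCovDist
  rw [tWeight_eq]
  congr 1
  apply congrArg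
  ext j
  simp [funext_iff, sub_eq_zero, hcol]

lemma genCovRadius_RM0 (m t : ℕ) :
    genCovRadius (RM 0 m) t = 2 ^ m - 2 ^ (m - t) := by
  set q : ℕ := 2 ^ (m - t) with hq
  have hq1 : 0 < q := Nat.pow_pos (by norm_num)
  have hqle : q ≤ 2 ^ m := Nat.pow_le_pow_right (by norm_num) (Nat.sub_le m t)
  have hmul : 2 ^ m ≤ 2 ^ t * q := by
    rw [hq, ← pow_add]
    exact Nat.pow_le_pow_right (by norm_num) (by omega)
  set ι := (Fin m → ZMod 2)
  have hcard : Fintype.card ι = 2 ^ m := by simp [ι]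
  set N : ℕ := 2 ^ m - q with hN
  -- membership of N
  have hmem : N ∈ {r : ℕ | ∀ v : Fin t → ι → ZMod 2, ∃ c : Fin t → ι → ZMod 2,
      (∀ i, c i ∈ RM 0 m) ∧ genCovDist v c ≤ r} := by
    intro v
    set col : ι → (Fin t → ZMod 2) := fun j i => v i j with hcoldef
    have hpig : ∃ b : Fin t → ZMod 2, q ≤ (Finset.univ.filter fun j : ι => col j = b).card := by
      by_cases htm : t ≤ m
      · obtain ⟨b, _, hb⟩ := Finset.exists_le_card_fiber_of_mul_le_card_of_maps_to
          (s := (Finset.univ : Finset ι)) (t := (Finset.univ : Finset (Fin t → ZMod 2)))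
          (f := col) (n := q) (fun a _ => Finset.mem_univ _) Finset.univ_nonempty
          (by
            rw [Finset.card_univ, Finset.card_univ, hcard]
            have : Fintype.card (Fin t → ZMod 2) = 2 ^ t := by simp
            rw [this, hq, ← pow_add]
            exact Nat.pow_le_pow_right (by norm_num) (by omega))
        exact ⟨b, hb⟩
      · have hq1' : q = 1 := by
          rw [hq]
          have : m - t = 0 := by omega
          simp [this]
        refine ⟨col (fun _ => 0), ?_⟩
        rw [hq1', Nat.one_le_iff_ne_zero, ← Nat.pos_iff_ne_zero, Finset.card_pos]
        exact ⟨fun _ => 0, Finset.mem_filter.mpr ⟨Finset.mem_univ _, rfl⟩⟩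
    obtain ⟨b, hb⟩ := hpig
    refine ⟨fun i _ => b i, fun i => (mem_RM0_iff _).mpr ⟨b i, fun _ => rfl⟩, ?_⟩
    rw [genCovDist_const v b col (fun j i => rfl), hcard]
    exact Nat.sub_le_sub_left hb _
  -- lower bound
  have hlb : ∀ r ∈ {r : ℕ | ∀ v : Fin t → ι → ZMod 2, ∃ c : Fin t → ι → ZMod 2,
      (∀ i, c i ∈ RM 0 m) ∧ genCovDist v c ≤ r}, N ≤ r := by
    intro r hr
    have e : ι ≃ Fin (2 ^ m) := Fintype.equivFinOfCardEq hcard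
    have g0 : (Fin t → ZMod 2) ≃ Fin (2 ^ t) := Fintype.equivFinOfCardEq (by simp)
    have hdiv : ∀ j : ι, (e j : ℕ) / q < 2 ^ t := by
      intro j
      rw [Nat.div_lt_iff_lt_mul hq1]
      exact lt_of_lt_of_le (e j).2 hmul
    set ψ : ι → (Fin t → ZMod 2) := fun j => g0.symm ⟨(e j : ℕ) / q, hdiv j⟩ with hψ
    obtain ⟨c, hc, hd⟩ := hr (fun i j => ψ j i)
    choose b hb using fun i => (mem_RM0_iff (c i)).mp (hc i)
    have hceq : c = fun i _ => b i := by
      funext i x; exact hb i x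
    rw [hceq] at hd
    rw [genCovDist_const _ b ψ (fun j i => rfl), hcard] at hd
    -- fiber bound
    have hfib : (Finset.univ.filter fun j : ι => ψ j = b).card ≤ q := by
      have := Finset.card_le_card_of_injOn (s := Finset.univ.filter fun j : ι => ψ j = b)
        (t := Finset.range q) (fun j => (e j : ℕ) % q)
        (fun a _ => Finset.mem_range.mpr (Nat.mod_lt _ hq1))
        (by
          intro j1 h1 j2 h2 hmod
          have h1' : ψ j1 = b := (Finset.mem_filter.mp h1).2
          have h2' : ψ j2 = b := (Finset.mem_filter.mp h2).2
          have hd1 : (e j1 : ℕ) / q = ((g0 b : Fin (2 ^ t)) : ℕ) := by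
            have : (⟨(e j1 : ℕ) / q, hdiv j1⟩ : Fin (2 ^ t)) = g0 b := by
              rw [← h1', hψ]; simp
            exact congrArg Fin.val this
          have hd2 : (e j2 : ℕ) / q = ((g0 b : Fin (2 ^ t)) : ℕ) := by
            have : (⟨(e j2 : ℕ) / q, hdiv j2⟩ : Fin (2 ^ t)) = g0 b := by
              rw [← h2', hψ]; simp
            exact congrArg Fin.val this
          have hmod' : (e j1 : ℕ) % q = (e j2 : ℕ) % q := hmod
          have hval : (e j1 : ℕ) = (e j2 : ℕ) := by
            have e1 := Nat.div_add_mod (e j1 : ℕ) q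
            have e2 := Nat.div_add_mod (e j2 : ℕ) q
            rw [hd1, hmod'] at e1
            rw [hd2] at e2
            exact e1.symm.trans e2
          exact e.injective (Fin.val_injective hval))
      simpa using this
    calc N = 2 ^ m - q := hN
    _ ≤ 2 ^ m - (Finset.univ.filter fun j : ι => ψ j = b).card := Nat.sub_le_sub_left hfib _
    _ ≤ r := hd
  unfold genCovRadius
  exact le_antisymm (Nat.sInf_le hmem) (le_csInf ⟨N, hmem⟩ hlb)

/-- R_t(RM(0,m)) = 2^m − ⌈2^{m−t}⌉ for the binary repetition code
RM(0,m) of length 2^m. -/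
theorem stmt4 (m t : ℕ) :
    (genCovRadius (RM 0 m) t : ℤ) = 2 ^ m - ⌈(2 : ℝ) ^ ((m : ℤ) - (t : ℤ))⌉ := by
  rw [genCovRadius_RM0]
  have hqle : 2 ^ (m - t) ≤ 2 ^ m := Nat.pow_le_pow_right (by norm_num) (Nat.sub_le m t)
  rw [Nat.cast_sub hqle]
  have hceil : ⌈(2 : ℝ) ^ ((m : ℤ) - (t : ℤ))⌉ = ((2 ^ (m - t) : ℕ) : ℤ) := by
    by_cases htm : t ≤ m
    · have hexp : (m : ℤ) - (t : ℤ) = ((m - t : ℕ) : ℤ) := by omega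
      rw [hexp, zpow_natCast]
      norm_cast
      exact Int.ceil_natCast _
    · have h0 : m - t = 0 := by omega
      rw [h0]
      simp only [pow_zero, Nat.cast_one]
      rw [Int.ceil_eq_iff]
      constructor
      · push_cast
        simpa using zpow_pos (by norm_num : (0:ℝ) < 2) ((m : ℤ) - (t : ℤ))
      · push_cast
        exact zpow_le_one_of_nonpos₀ (by norm_num) (by omega)
  rw [hceil]
  push_cast
  ring
end

section
/- For all m, t ∈ ℕ, the t-th generalized covering radius of the binary extended Hamming code of length 2^m, i.e., RM(m−2,m), equals min{t, m} + 1. -/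
namespace Stmt7Aux

def col (m : ℕ) (x : Fin m → ZMod 2) : Fin (m+1) → ZMod 2 := Fin.cons 1 x

lemma col_injective (m : ℕ) : Function.Injective (col m) := by
  intro a b h
  have := congrArg Fin.tail h
  simpa [col, Fin.tail_cons] using this

noncomputable def synd (m : ℕ) (v : (Fin m → ZMod 2) → ZMod 2) : Fin (m+1) → ZMod 2 :=
  fun i => ∑ x, v x * col m x i

lemma synd_sub (m : ℕ) (a b : (Fin m → ZMod 2) → ZMod 2) :
    synd m (a - b) = synd m a - synd m b := by
  funext i
  simp [synd, sub_mul, Finset.sum_sub_distrib]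

lemma synd_eq_sum (m : ℕ) (e : (Fin m → ZMod 2) → ZMod 2) (J : Finset (Fin m → ZMod 2))
    (hJ : ∀ x, e x ≠ 0 → x ∈ J) :
    synd m e = ∑ x ∈ J, e x • col m x := by
  funext i
  rw [Finset.sum_apply]
  have h2 : ∑ x ∈ J, (e x • col m x) i = ∑ x : Fin m → ZMod 2, (e x • col m x) i := by
    apply Finset.sum_subset (Finset.subset_univ J)
    intro x _ hx
    have : e x = 0 := by by_contra h; exact hx (hJ x h)
    simp [this]
  rw [h2]
  simp [synd, smul_eq_mul]

lemma synd_mem_span (m : ℕ) (e : (Fin m → ZMod 2) → ZMod 2) (J : Finset (Fin m → ZMod 2))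
    (hJ : ∀ x, e x ≠ 0 → x ∈ J) :
    synd m e ∈ Submodule.span (ZMod 2) (col m '' J) := by
  rw [synd_eq_sum m e J hJ]
  exact Submodule.sum_mem _ fun x hx => Submodule.smul_mem _ _
    (Submodule.subset_span ⟨x, hx, rfl⟩)

lemma exists_e_of_mem_span (m : ℕ) (J : Finset (Fin m → ZMod 2)) (s : Fin (m+1) → ZMod 2)
    (hs : s ∈ Submodule.span (ZMod 2) (col m '' J)) :
    ∃ e : (Fin m → ZMod 2) → ZMod 2, (∀ x, e x ≠ 0 → x ∈ J) ∧ synd m e = s := by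
  classical
  have hs' : s ∈ Submodule.span (ZMod 2) ((J.image (col m) : Finset _) : Set _) := by
    rwa [Finset.coe_image]
  obtain ⟨f, -, hf⟩ := Submodule.mem_span_finset.1 hs'
  refine ⟨fun x => if x ∈ J then f (col m x) else 0, fun x hx => by by_contra h; simp [h] at hx, ?_⟩
  rw [synd_eq_sum m _ J (fun x hx => by by_contra h; simp [h] at hx)]
  rw [← hf, Finset.sum_image (fun a _ b _ h => col_injective m h)]
  apply Finset.sum_congr rfl
  intro x hx
  simp [hx]

def cons0L (m : ℕ) : (Fin m → ZMod 2) →ₗ[ZMod 2] (Fin (m+1) → ZMod 2) where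
  toFun w := Fin.cons 0 w
  map_add' a b := by
    funext i
    refine Fin.cases ?_ (fun j => ?_) i <;> simp
  map_smul' c a := by
    funext i
    refine Fin.cases ?_ (fun j => ?_) i <;> simp

lemma cover (m t : ℕ) (s : Fin t → Fin (m+1) → ZMod 2) :
    ∃ J : Finset (Fin m → ZMod 2), J.card ≤ min t m + 1 ∧
      ∀ i, s i ∈ Submodule.span (ZMod 2) (col m '' J) := by
  classical
  set tails : Set (Fin m → ZMod 2) := Set.range (fun i => Fin.tail (s i)) with htails
  obtain ⟨b, hbsub, hbspan, hbind⟩ := exists_linearIndependent (ZMod 2) tails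
  have hbfin : b.Finite := Set.Finite.subset (Set.finite_range _) hbsub
  haveI : Fintype b := hbfin.fintype
  set bF : Finset (Fin m → ZMod 2) := b.toFinset with hbF
  have hcard_m : bF.card ≤ m := by
    have h1 := hbind.fintype_card_le_finrank
    rw [Module.finrank_fin_fun] at h1
    have h2 : bF.card = Fintype.card b := Set.toFinset_card b
    have h3 : Fintype.card b = Fintype.card {x // x ∈ b} := Fintype.card_congr (Equiv.refl _)
    omega
  have hcard_t : bF.card ≤ t := by
    have hsub : bF ⊆ Finset.univ.image (fun i => Fin.tail (s i)) := by
      intro x hx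
      obtain ⟨i, hi⟩ := hbsub (Set.mem_toFinset.1 hx)
      exact Finset.mem_image.2 ⟨i, Finset.mem_univ i, hi⟩
    calc bF.card ≤ _ := Finset.card_le_card hsub
      _ ≤ Finset.univ.card := Finset.card_image_le
      _ = t := by simp
  refine ⟨insert 0 bF, ?_, ?_⟩
  · calc (insert 0 bF).card ≤ bF.card + 1 := Finset.card_insert_le _ _
      _ ≤ min t m + 1 := by omega
  · intro i
    set W := Submodule.span (ZMod 2) (col m '' ↑(insert (0 : Fin m → ZMod 2) bF)) with hW
    have hcol0 : col m 0 ∈ W := Submodule.subset_span ⟨0, by simp, rfl⟩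
    have hcons0 : ∀ w ∈ b, Fin.cons 0 w ∈ W := by
      intro w hw
      have hcolw : col m w ∈ W := Submodule.subset_span ⟨w, by simp [hbF, Set.mem_toFinset.2 hw, hw], rfl⟩
      have : (Fin.cons 0 w : Fin (m+1) → ZMod 2) = col m w + col m 0 := by
        funext j
        refine Fin.cases ?_ (fun k => ?_) j <;> simp [col]
        decide
      rw [this]
      exact W.add_mem hcolw hcol0
    have hspan : ∀ w ∈ Submodule.span (ZMod 2) b, cons0L m w ∈ W := by
      intro w hw
      have hmap : cons0L m w ∈ Submodule.map (cons0L m) (Submodule.span (ZMod 2) b) :=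
        Submodule.mem_map_of_mem hw
      rw [Submodule.map_span] at hmap
      refine Submodule.span_le.2 ?_ hmap
      rintro _ ⟨w', hw', rfl⟩
      exact hcons0 w' hw'
    have htail : Fin.tail (s i) ∈ Submodule.span (ZMod 2) b := by
      rw [hbspan]
      exact Submodule.subset_span ⟨i, rfl⟩
    have h1 : (Fin.cons 0 (Fin.tail (s i)) : Fin (m+1) → ZMod 2) ∈ W := hspan _ htail
    have h2 : s i = Fin.cons 0 (Fin.tail (s i)) + (s i 0) • col m 0 := by
      funext j
      refine Fin.cases ?_ (fun k => ?_) j <;> simp [col, Fin.tail]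
    rw [h2]
    exact W.add_mem h1 (W.smul_mem _ hcol0)

set_option maxHeartbeats 1000000 in
lemma lower_card (m t : ℕ) (ht : 1 ≤ t) (hm : 1 ≤ m) (J : Finset (Fin m → ZMod 2))
    (hJ : ∀ i : Fin t,
      (Fin.cons 0 (Pi.single (⟨min i (m-1), by omega⟩ : Fin m) (1 : ZMod 2)) : Fin (m+1) → ZMod 2)
        ∈ Submodule.span (ZMod 2) (col m '' J)) :
    min t m + 1 ≤ J.card := by
  classical
  set d := min t m with hd
  have hd1 : 1 ≤ d := by omega
  have hdm : d ≤ m := by omega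
  have hdt : d ≤ t := by omega
  have hJne : J.Nonempty := by
    rcases Finset.eq_empty_or_nonempty J with h | h
    · exfalso
      have hmem0 := hJ ⟨0, ht⟩
      rw [h] at hmem0
      simp only [Finset.coe_empty, Set.image_empty, Submodule.span_empty,
        Submodule.mem_bot] at hmem0
      have h2 := congrFun hmem0 (Fin.succ ⟨0, by omega⟩)
      rw [Fin.cons_succ] at h2
      have h3 : (⟨min ((⟨0, ht⟩ : Fin t) : ℕ) (m-1), by omega⟩ : Fin m) = ⟨0, by omega⟩ := by
        apply Fin.ext; simp
      rw [h3, Pi.single_eq_same] at h2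
      simpa using h2
    · exact h
  obtain ⟨j0, hj0⟩ := hJne
  set W := Submodule.span (ZMod 2) (col m '' ↑J) with hW
  set f : Fin (d+1) → (Fin (m+1) → ZMod 2) := fun k =>
    if h : (k : ℕ) < d then Fin.cons 0 (Pi.single (⟨k, by omega⟩ : Fin m) (1 : ZMod 2))
    else col m j0 with hf
  have hmem : ∀ k, f k ∈ W := by
    intro k
    by_cases h : (k : ℕ) < d
    · have hik := hJ ⟨k, by omega⟩
      have heq : (⟨min (k : ℕ) (m-1), by omega⟩ : Fin m) = ⟨k, by omega⟩ := by
        apply Fin.ext; simp; omega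
      rw [heq] at hik
      simpa [hf, h] using hik
    · simp only [hf, h, dif_neg, not_false_iff]
      exact Submodule.subset_span ⟨j0, hj0, rfl⟩
  have hind : LinearIndependent (ZMod 2) f := by
    rw [Fintype.linearIndependent_iff]
    intro g hg
    have hlast : g ⟨d, by omega⟩ = 0 := by
      have h0 := congrFun hg 0
      rw [Finset.sum_apply] at h0
      rw [Finset.sum_eq_single (⟨d, by omega⟩ : Fin (d+1))] at h0
      · simpa [hf, col] using h0
      · intro k _ hk
        have hkd : (k : ℕ) < d := by
          have h1 := k.isLt
          have h2 : (k : ℕ) ≠ d := fun h => hk (Fin.ext h)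
          omega
        simp [hf, hkd]
      · simp
    intro k
    by_cases hk : (k : ℕ) < d
    · have hq := congrFun hg (Fin.succ ⟨(k : ℕ), by omega⟩)
      rw [Finset.sum_apply] at hq
      rw [Finset.sum_eq_single k] at hq
      · simp only [hf, dif_pos hk, Pi.smul_apply, Fin.cons_succ, smul_eq_mul,
          Pi.single_eq_same, mul_one, Pi.zero_apply] at hq
        exact hq
      · intro k' _ hk'
        by_cases hk'd : (k' : ℕ) < d
        · have hne : (⟨(k' : ℕ), by omega⟩ : Fin m) ≠ ⟨(k : ℕ), by omega⟩ := by
            intro h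
            exact hk' (Fin.ext (by simpa using congrArg Fin.val h))
          simp only [hf, dif_pos hk'd, Pi.smul_apply, Fin.cons_succ, smul_eq_mul]
          rw [Pi.single_eq_of_ne hne.symm, mul_zero]
        · have hkk : k' = ⟨d, by omega⟩ := by
            apply Fin.ext; have h1 := k'.isLt; simp; omega
          rw [hkk]
          simp [hlast]
      · simp
    · have hkk : k = ⟨d, by omega⟩ := by
        apply Fin.ext; have h1 := k.isLt; simp; omega
      rw [hkk]; exact hlast
  set F : Fin (d+1) → W := fun k => ⟨f k, hmem k⟩ with hF
  have hindF : LinearIndependent (ZMod 2) F := by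
    apply LinearIndependent.of_comp W.subtype
    have hcomp : W.subtype ∘ F = f := rfl
    rw [hcomp]
    exact hind
  have h1 : d + 1 ≤ Module.finrank (ZMod 2) W := by
    have := hindF.fintype_card_le_finrank
    simpa using this
  have h2 : Module.finrank (ZMod 2) W ≤ J.card := by
    have h3 := finrank_span_finset_le_card (R := ZMod 2) (J.image (col m))
    rw [Set.finrank, Finset.coe_image] at h3
    calc Module.finrank (ZMod 2) W ≤ (J.image (col m)).card := h3
      _ ≤ J.card := Finset.card_image_le
  omega

lemma synd_indicator (m : ℕ) (a : Fin m → ZMod 2) :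
    synd m (fun x => if x = a then (1 : ZMod 2) else 0) = col m a := by
  classical
  funext i
  simp [synd, ite_mul, Finset.sum_ite_eq']

lemma synd_add (m : ℕ) (a b : (Fin m → ZMod 2) → ZMod 2) :
    synd m (a + b) = synd m a + synd m b := by
  funext i
  simp [synd, add_mul, Finset.sum_add_distrib]

def yW (m t : ℕ) (hm : 1 ≤ m) (i : Fin t) : Fin m → ZMod 2 :=
  Pi.single (⟨min i (m-1), by omega⟩ : Fin m) (1 : ZMod 2)

noncomputable def vW (m t : ℕ) (hm : 1 ≤ m) (i : Fin t) : (Fin m → ZMod 2) → ZMod 2 :=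
  fun x => (if x = 0 then (1 : ZMod 2) else 0) + (if x = yW m t hm i then 1 else 0) 

lemma synd_vW (m t : ℕ) (hm : 1 ≤ m) (i : Fin t) :
    synd m (vW m t hm i) = Fin.cons 0 (yW m t hm i) := by
  classical
  have h : vW m t hm i = (fun x => if x = 0 then (1 : ZMod 2) else 0)
      + (fun x => if x = yW m t hm i then (1 : ZMod 2) else 0) := rfl
  rw [h, synd_add, synd_indicator, synd_indicator]
  funext j
  refine Fin.cases ?_ (fun k => ?_) j <;> simp [col]
  decide

open Classical in
lemma tWeight_support {ι F : Type*} [Fintype ι] [Zero F] {t : ℕ} (v : Fin t → ι → F) :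
    ∃ J : Finset ι, J.card = tWeight v ∧ ∀ x, (∃ i, v i x ≠ (0:F)) → x ∈ J :=
  ⟨Finset.univ.filter fun j => ∃ i, v i j ≠ (0:F), rfl,
   fun x hx => Finset.mem_filter.2 ⟨Finset.mem_univ x, hx⟩⟩

open Classical in
lemma tWeight_le_card {ι F : Type*} [Fintype ι] [Zero F] {t : ℕ} (v : Fin t → ι → F)
    (J : Finset ι) (h : ∀ x, (∃ i, v i x ≠ (0:F)) → x ∈ J) : tWeight v ≤ J.card := by
  rw [tWeight]
  exact Finset.card_le_card fun x hx => h x (Finset.mem_filter.1 hx).2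

end Stmt7Aux

open Stmt7Aux in
/-- the t-th generalized covering radius of the binary extended Hamming
code of length 2^m (i.e. RM(m−2,m)), whose parity-check matrix has as columns all
binary vectors of length 2^m with first coordinate 1, equals min{t,m} + 1. -/
theorem stmt7 (m t : ℕ) (ht : 1 ≤ t) :
    genCovRadius
      {v : (Fin m → ZMod 2) → ZMod 2 |
        ∀ i : Fin (m + 1),
          ∑ x : Fin m → ZMod 2, v x * (Fin.cons 1 x : Fin (m + 1) → ZMod 2) i = 0} t
      = min t m + 1 := by
  set C : Set ((Fin m → ZMod 2) → ZMod 2) :=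
    {v | ∀ i : Fin (m + 1),
      ∑ x : Fin m → ZMod 2, v x * (Fin.cons 1 x : Fin (m + 1) → ZMod 2) i = 0} with hC
  have hmemC : ∀ v, v ∈ C ↔ synd m v = 0 := by
    intro v
    constructor
    · intro h; funext i; exact h i
    · intro h i; exact congrFun h i
  set S : Set ℕ :=
    {r : ℕ | ∀ v : Fin t → (Fin m → ZMod 2) → ZMod 2,
      ∃ c : Fin t → (Fin m → ZMod 2) → ZMod 2, (∀ i, c i ∈ C) ∧ genCovDist v c ≤ r} with hS
  have hupper : min t m + 1 ∈ S := by
    intro v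
    obtain ⟨J, hJcard, hJspan⟩ := cover m t (fun i => synd m (v i))
    choose e he hse using fun i => exists_e_of_mem_span m J (synd m (v i)) (hJspan i)
    refine ⟨fun i => v i - e i, fun i => ?_, ?_⟩
    · rw [hmemC]
      rw [synd_sub, hse i, sub_self]
    · have hvc : v - (fun i => v i - e i) = e := by
        funext i x
        simp
      rw [genCovDist, hvc]
      calc tWeight e ≤ J.card := tWeight_le_card e J (fun x hx => hx.elim fun i hi => he i x hi)
        _ ≤ min t m + 1 := hJcard
  have hlower : ∀ r ∈ S, min t m + 1 ≤ r := by
    intro r hr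
    rcases Nat.eq_zero_or_pos m with hm | hm
    · subst hm
      obtain ⟨c, hc, hle⟩ := hr (fun _ _ => 1)
      have hc0 : ∀ i x, c i x = 0 := by
        intro i x
        have h1 := (hc i) 0
        have h2 : ∀ y : Fin 0 → ZMod 2, y = x := fun y => Subsingleton.elim y x
        rw [Fintype.sum_eq_single x (fun y hy => absurd (h2 y) hy)] at h1
        simpa using h1
      rw [genCovDist] at hle
      obtain ⟨J0, hJ0card, hJ0mem⟩ := tWeight_support ((fun _ _ => (1 : ZMod 2)) - c)
      have h1 : 1 ≤ J0.card := by
        refine Finset.card_pos.2 ⟨(fun i => 0 : Fin 0 → ZMod 2), hJ0mem _ ⟨⟨0, ht⟩, ?_⟩⟩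
        simp [hc0]
      omega
    · obtain ⟨c, hc, hle⟩ := hr (vW m t hm)
      rw [genCovDist] at hle
      obtain ⟨J, hJcard, hJmem⟩ := tWeight_support (vW m t hm - c)
      have hspan : ∀ i : Fin t,
          (Fin.cons 0 (Pi.single (⟨min i (m-1), by omega⟩ : Fin m) (1 : ZMod 2))
            : Fin (m+1) → ZMod 2) ∈ Submodule.span (ZMod 2) (col m '' J) := by
        intro i
        have h1 : synd m ((vW m t hm - c) i) = Fin.cons 0 (yW m t hm i) := by
          have h2 : (vW m t hm - c) i = vW m t hm i - c i := rfl
          rw [h2, synd_sub, synd_vW, (hmemC (c i)).1 (hc i), sub_zero]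
        have h3 : (Fin.cons 0 (Pi.single (⟨min i (m-1), by omega⟩ : Fin m) (1 : ZMod 2))
            : Fin (m+1) → ZMod 2) = Fin.cons 0 (yW m t hm i) := rfl
        rw [h3, ← h1]
        apply synd_mem_span
        intro x hx
        exact hJmem x ⟨i, hx⟩
      have := lower_card m t ht hm J hspan
      omega
  rw [genCovRadius]
  exact le_antisymm (Nat.sInf_le hupper) (le_csInf ⟨_, hupper⟩ hlower)
end

section
/- If a linear code C over F_q is obtained from codes C₁ and C₂ of equal length by the (u, u+v) construction, then R_t(C) ≤ R_t(C₁) + R_t(C₂) for every t ∈ ℕ. Consequently, for Reed-Muller codes, R_t(r,m) ≤ R_t(r−1,m−1) + R_t(r,m−1) for all m,t ∈ ℕ and 1 ≤ r ≤ m−1. -/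
open Classical

lemma tWeight_le_card {ι F : Type*} [Fintype ι] [Zero F] {t : ℕ} (v : Fin t → ι → F) :
    tWeight v ≤ Fintype.card ι := by
  classical
  exact (Finset.card_filter_le _ _)

lemma tWeight_comp_equiv {ι ι' F : Type*} [Fintype ι] [Fintype ι'] [Zero F] {t : ℕ}
    (e : ι ≃ ι') (w : Fin t → ι' → F) :
    tWeight (fun i => w i ∘ e) = tWeight w := by
  classical
  unfold tWeight
  refine Finset.card_bij (fun j _ => e j) ?_ ?_ ?_
  · intro j hj
    simp only [Finset.mem_filter, Finset.mem_univ, true_and] at hj ⊢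
    exact hj
  · intro a _ b _ h
    exact e.injective h
  · intro j' hj'
    simp only [Finset.mem_filter, Finset.mem_univ, true_and] at hj' ⊢
    exact ⟨e.symm j', by simpa using hj', by simp⟩

lemma tWeight_sum {κ F : Type*} [Fintype κ] [Zero F] {t : ℕ} (w : Fin t → κ ⊕ κ → F) :
    tWeight w = tWeight (fun i => w i ∘ Sum.inl) + tWeight (fun i => w i ∘ Sum.inr) := by
  classical
  unfold tWeight
  rw [← Finset.card_disjSum]
  congr 1
  ext x
  rcases x with a | b <;>
    simp [Finset.mem_disjSum]

lemma key_uuv {κ F : Type*} [Fintype κ] [AddCommGroup F] (A B : Set (κ → F)) (t : ℕ)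
    (a0 : κ → F) (ha0 : a0 ∈ A) (b0 : κ → F) (hb0 : b0 ∈ B) :
    genCovRadius {w : κ ⊕ κ → F | ∃ u ∈ A, ∃ v ∈ B, w = Sum.elim u (u + v)} t
      ≤ genCovRadius A t + genCovRadius B t := by
  classical
  have hAne : {r : ℕ | ∀ v : Fin t → κ → F, ∃ c : Fin t → κ → F,
      (∀ i, c i ∈ A) ∧ genCovDist v c ≤ r}.Nonempty :=
    ⟨Fintype.card κ, fun v => ⟨fun _ => a0, fun _ => ha0, tWeight_le_card _⟩⟩
  have hBne : {r : ℕ | ∀ v : Fin t → κ → F, ∃ c : Fin t → κ → F,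
      (∀ i, c i ∈ B) ∧ genCovDist v c ≤ r}.Nonempty :=
    ⟨Fintype.card κ, fun v => ⟨fun _ => b0, fun _ => hb0, tWeight_le_card _⟩⟩
  have hA := Nat.sInf_mem hAne
  have hB := Nat.sInf_mem hBne
  apply Nat.sInf_le
  intro v
  obtain ⟨u, hu, hud⟩ := hA (fun i => v i ∘ Sum.inl)
  obtain ⟨w, hw, hwd⟩ := hB ((fun i => v i ∘ Sum.inr) - u)
  refine ⟨fun i => Sum.elim (u i) (u i + w i), fun i => ⟨u i, hu i, w i, hw i, rfl⟩, ?_⟩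
  have hsplit : genCovDist v (fun i => Sum.elim (u i) (u i + w i))
      = genCovDist (fun i => v i ∘ Sum.inl) u
        + genCovDist ((fun i => v i ∘ Sum.inr) - u) w := by
    unfold genCovDist
    rw [tWeight_sum]
    have h1 : (fun i => (v - fun j => Sum.elim (u j) (u j + w j)) i ∘ Sum.inl)
        = (fun i => v i ∘ Sum.inl) - u := by
      funext i a
      simp
    have h2 : (fun i => (v - fun j => Sum.elim (u j) (u j + w j)) i ∘ Sum.inr)
        = ((fun i => v i ∘ Sum.inr) - u) - w := by
      funext i a
      simp only [Pi.sub_apply, Sum.elim_inr, Function.comp_apply]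
      exact sub_add_eq_sub_sub _ _ _
    rw [h1, h2]
  rw [hsplit]
  exact Nat.add_le_add hud hwd

lemma zero_mem_RM (r m : ℕ) : (0 : (Fin m → ZMod 2) → ZMod 2) ∈ RM r m :=
  ⟨0, by simp, by simp⟩

/-- The equivalence splitting points by their first coordinate. -/
def splitEquiv (k : ℕ) : (Fin (k + 1) → ZMod 2) ≃ ((Fin k → ZMod 2) ⊕ (Fin k → ZMod 2)) where
  toFun x := if x 0 = 0 then Sum.inl (Fin.tail x) else Sum.inr (Fin.tail x)
  invFun y := Sum.elim (fun y => (Fin.cons 0 y : Fin (k + 1) → ZMod 2)) (fun y => Fin.cons 1 y) y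
  left_inv x := by
    have h2 : ∀ a : ZMod 2, a = 0 ∨ a = 1 := by decide
    dsimp only
    by_cases h : x 0 = 0
    · rw [if_pos h]
      simp only [Sum.elim_inl]
      rw [← h, Fin.cons_self_tail]
    · have h1 : x 0 = 1 := (h2 (x 0)).resolve_left h
      rw [if_neg h]
      simp only [Sum.elim_inr]
      rw [← h1, Fin.cons_self_tail]
  right_inv y := by
    dsimp only
    rcases y with y | y
    · simp only [Sum.elim_inl, Fin.cons_zero, if_true, Fin.tail_cons]
    · simp only [Sum.elim_inr, Fin.cons_zero, Fin.tail_cons,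
        if_neg (by decide : (1 : ZMod 2) ≠ 0)]

lemma RM_step (s k t : ℕ) :
    genCovRadius (RM (s + 1) (k + 1)) t
      ≤ genCovRadius (RM s k) t + genCovRadius (RM (s + 1) k) t := by
  classical
  set D : Set (((Fin k → ZMod 2) ⊕ (Fin k → ZMod 2)) → ZMod 2) :=
    {w | ∃ u ∈ RM (s + 1) k, ∃ v ∈ RM s k, w = Sum.elim u (u + v)} with hD
  have hkey : genCovRadius D t ≤ genCovRadius (RM (s + 1) k) t + genCovRadius (RM s k) t :=
    key_uuv _ _ t 0 (zero_mem_RM _ _) 0 (zero_mem_RM _ _)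
  refine le_trans ?_ (hkey.trans (le_of_eq (Nat.add_comm _ _)))
  -- reduce to showing genCovRadius D t belongs to the defining set of the RM radius
  have hDne : {r : ℕ | ∀ v : Fin t → ((Fin k → ZMod 2) ⊕ (Fin k → ZMod 2)) → ZMod 2,
      ∃ c, (∀ i, c i ∈ D) ∧ genCovDist v c ≤ r}.Nonempty := by
    refine ⟨Fintype.card _, fun v => ⟨fun _ => 0, fun _ => ?_, tWeight_le_card _⟩⟩
    exact ⟨0, zero_mem_RM _ _, 0, zero_mem_RM _ _, by simp⟩
  have hDmem := Nat.sInf_mem hDne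
  apply Nat.sInf_le
  intro v
  set e := splitEquiv k with he
  obtain ⟨c', hc', hd⟩ := hDmem (fun i => v i ∘ e.symm)
  refine ⟨fun i => c' i ∘ e, ?_, ?_⟩
  · intro i
    obtain ⟨u, ⟨p, hp, hpu⟩, w, ⟨qq, hq, hqw⟩, hce⟩ := hc' i
    refine ⟨MvPolynomial.rename Fin.succ p
        + MvPolynomial.X 0 * MvPolynomial.rename Fin.succ qq, ?_, ?_⟩
    · refine le_trans (MvPolynomial.totalDegree_add _ _) (max_le ?_ ?_)
      · exact le_trans (MvPolynomial.totalDegree_rename_le _ _) hp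
      · refine le_trans (MvPolynomial.totalDegree_mul _ _) ?_
        have h1 : (MvPolynomial.X (0 : Fin (k + 1)) :
            MvPolynomial (Fin (k + 1)) (ZMod 2)).totalDegree = 1 :=
          MvPolynomial.totalDegree_X _
        have h2 := le_trans (MvPolynomial.totalDegree_rename_le Fin.succ qq) hq
        rw [h1]
        calc 1 + ((MvPolynomial.rename Fin.succ) qq).totalDegree
            ≤ 1 + s := Nat.add_le_add_left h2 1
          _ = s + 1 := Nat.add_comm 1 s
    · intro x
      have hev : MvPolynomial.eval x (MvPolynomial.rename Fin.succ p
          + MvPolynomial.X 0 * MvPolynomial.rename Fin.succ qq)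
          = MvPolynomial.eval (Fin.tail x) p + x 0 * MvPolynomial.eval (Fin.tail x) qq := by
        simp [MvPolynomial.eval_rename]
        rfl
      show MvPolynomial.eval x _ = c' i (e x)
      rw [hev, hce]
      have h2 : ∀ a : ZMod 2, a = 0 ∨ a = 1 := by decide
      rcases h2 (x 0) with h | h
      · have : e x = Sum.inl (Fin.tail x) := by simp [he, splitEquiv, h]
        rw [this]
        simp [h, hpu]
      · have : e x = Sum.inr (Fin.tail x) := by
          simp [he, splitEquiv, h]
        rw [this]
        simp [h, hpu, hqw]
  · have hco : genCovDist v (fun i => c' i ∘ e)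
        = genCovDist (fun i => v i ∘ e.symm) c' := by
      unfold genCovDist
      rw [← tWeight_comp_equiv e (((fun i => v i ∘ e.symm)) - c')]
      congr 1
      funext i x
      simp
    rw [hco]
    exact hd

/-- if C is obtained from C₁, C₂ by the (u,u+v) construction then
R_t(C) ≤ R_t(C₁) + R_t(C₂); consequently for Reed-Muller codes
R_t(r,m) ≤ R_t(r−1,m−1) + R_t(r,m−1) for 1 ≤ r ≤ m−1. -/
theorem stmt10 (q n : ℕ) (F : Type) [Field F] [Fintype F] (hq : Fintype.card F = q)
    (C₁ C₂ : Submodule F (Fin n → F)) (t : ℕ) :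
    genCovRadius {w : Fin n ⊕ Fin n → F | ∃ u ∈ C₁, ∃ v ∈ C₂, w = Sum.elim u (u + v)} t
      ≤ genCovRadius (C₁ : Set (Fin n → F)) t + genCovRadius (C₂ : Set (Fin n → F)) t ∧
    ∀ r m : ℕ, 1 ≤ r → r ≤ m - 1 →
      genCovRadius (RM r m) t
        ≤ genCovRadius (RM (r - 1) (m - 1)) t + genCovRadius (RM r (m - 1)) t := by
  constructor
  · exact key_uuv (C₁ : Set (Fin n → F)) (C₂ : Set (Fin n → F)) t 0 C₁.zero_mem 0 C₂.zero_mem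
  · intro r m hr hm
    rcases r with _ | s
    · omega
    rcases m with _ | k
    · omega
    simpa using RM_step s k t
end

section
/- For all integers n ≥ 1 and prime powers q ≥ 2, the smallest real root of the degree-2 Krawtchouk polynomial K₂(x; n, q) = (1/2)(q²x² − q(2qn − q − 2n + 2)x + (q−1)²n(n−1)) satisfies x(2,n;q) ≤ (1 − 1/q)·n − √((q−1)n)/q. -/
/-- the smallest real root of the degree-2 Krawtchouk polynomial
K₂(x;n,q) = (1/2)(q²x² − q(2qn−q−2n+2)x + (q−1)²n(n−1)) is at most
(1 − 1/q)n − √((q−1)n)/q, for n ≥ 1 and prime powers q ≥ 2. -/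
theorem stmt11 (n q : ℕ) (hn : 1 ≤ n) (hq2 : 2 ≤ q)
    (hq : ∃ p k : ℕ, p.Prime ∧ 0 < k ∧ q = p ^ k) (x₀ : ℝ)
    (hx : IsLeast {x : ℝ |
        (1 / 2) * ((q : ℝ) ^ 2 * x ^ 2
          - (q : ℝ) * (2 * (q : ℝ) * (n : ℝ) - (q : ℝ) - 2 * (n : ℝ) + 2) * x
          + ((q : ℝ) - 1) ^ 2 * (n : ℝ) * ((n : ℝ) - 1)) = 0} x₀) :
    x₀ ≤ (1 - 1 / (q : ℝ)) * (n : ℝ) - Real.sqrt (((q : ℝ) - 1) * (n : ℝ)) / (q : ℝ) := by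
  obtain ⟨-, hlb⟩ := hx
  have hQ : (2:ℝ) ≤ (q:ℝ) := by exact_mod_cast hq2
  have hN : (1:ℝ) ≤ (n:ℝ) := by exact_mod_cast hn
  have hQ0 : (0:ℝ) < (q:ℝ) := by linarith
  set Q := (q:ℝ)
  set N := (n:ℝ)
  have hE0 : (0:ℝ) ≤ (Q - 1) * N := by nlinarith
  set D : ℝ := 4 * ((Q - 1) * N) + (Q - 2)^2 with hDdef
  have hD0 : (0:ℝ) ≤ D := by positivity
  have hsD : Real.sqrt D ^ 2 = D := Real.sq_sqrt hD0
  set r : ℝ := ((Q - 1) * N + 1 - Q/2 - Real.sqrt D / 2) / Q with hr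
  have hroot : r ∈ {x : ℝ |
        (1 / 2) * (Q ^ 2 * x ^ 2 - Q * (2 * Q * N - Q - 2 * N + 2) * x
          + (Q - 1) ^ 2 * N * (N - 1)) = 0} := by
    simp only [Set.mem_setOf_eq, hr]
    have hQne : Q ≠ 0 := ne_of_gt hQ0
    field_simp
    linear_combination hsD
  have h1 := hlb hroot
  have hsE : Real.sqrt (4 * ((Q - 1) * N)) = 2 * Real.sqrt ((Q - 1) * N) := by
    rw [show (4:ℝ) * ((Q - 1) * N) = 2^2 * ((Q - 1) * N) by ring,
      Real.sqrt_mul (by positivity), Real.sqrt_sq (by norm_num)]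
  have hmono : 2 * Real.sqrt ((Q - 1) * N) ≤ Real.sqrt D := by
    rw [← hsE]
    exact Real.sqrt_le_sqrt (by nlinarith)
  have h2 : r ≤ (1 - 1 / Q) * N - Real.sqrt ((Q - 1) * N) / Q := by
    rw [hr, div_le_iff₀ hQ0]
    have : ((1 - 1 / Q) * N - Real.sqrt ((Q - 1) * N) / Q) * Q
        = (Q - 1) * N - Real.sqrt ((Q - 1) * N) := by field_simp
    rw [this]
    linarith
  linarith
end

section
/- For all m, t ∈ ℕ with m ≥ 1, R_t(1,m) ≤ (1 − 1/2^t)·2^m − (√(2^t − 1)/2^t)·2^{m/2}, where R_t(1,m) is the t-th generalized covering radius of the first-order Reed-Muller code RM(1,m). -/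
open Finset

noncomputable def chi (z : ZMod 2) : ℝ := if z = 0 then 1 else -1

lemma chi_zero : chi 0 = 1 := if_pos rfl

lemma zmod2_eq_one {a : ZMod 2} (h : a ≠ 0) : a = 1 := by
  revert a; decide

lemma zmod2_add_self (a : ZMod 2) : a + a = 0 := by
  fin_cases a <;> decide

lemma zmod2_add_eq_zero {a b : ZMod 2} : a + b = 0 ↔ a = b := by
  constructor
  · intro h
    by_cases ha : a = 0
    · by_cases hb : b = 0
      · rw [ha, hb]
      · rw [ha, zmod2_eq_one hb] at h ⊢; simpa using h
    · by_cases hb : b = 0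
      · rw [hb, zmod2_eq_one ha] at h ⊢; simpa using h
      · rw [zmod2_eq_one ha, zmod2_eq_one hb]
  · rintro rfl; exact zmod2_add_self a

lemma chi_one : chi 1 = -1 := by norm_num [chi]

lemma chi_add (a b : ZMod 2) : chi (a + b) = chi a * chi b := by
  by_cases ha : a = 0
  · simp [ha, chi_zero]
  · by_cases hb : b = 0
    · simp [hb, chi_zero]
    · rw [zmod2_eq_one ha, zmod2_eq_one hb, show (1:ZMod 2)+1 = 0 from zmod2_add_self 1,
        chi_zero, chi_one]
      norm_num

lemma sum_chi : ∑ b : ZMod 2, chi b = 0 := by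
  rw [show (univ : Finset (ZMod 2)) = {0, 1} from by decide]
  norm_num [chi_zero, chi_one]

variable {m : ℕ}

def dotp (a x : Fin m → ZMod 2) : ZMod 2 := ∑ k, a k * x k

lemma dotp_add_left (a b x : Fin m → ZMod 2) : dotp (a + b) x = dotp a x + dotp b x := by
  simp [dotp, add_mul, Finset.sum_add_distrib]

lemma dotp_add_right (a x y : Fin m → ZMod 2) : dotp a (x + y) = dotp a x + dotp a y := by
  simp [dotp, mul_add, Finset.sum_add_distrib]

lemma dotp_single (j : Fin m) (x : Fin m → ZMod 2) : dotp (Pi.single j 1) x = x j := by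
  rw [dotp]
  rw [Finset.sum_eq_single j]
  · simp
  · intro k _ hk; simp [Pi.single_apply, hk]
  · simp

lemma sum_chi_dotp (x : Fin m → ZMod 2) :
    ∑ a : Fin m → ZMod 2, chi (dotp a x) = if x = 0 then (2:ℝ)^m else 0 := by
  by_cases hx : x = 0
  · rw [hx, if_pos rfl]
    have : ∀ a : Fin m → ZMod 2, chi (dotp a (0 : Fin m → ZMod 2)) = 1 := by
      intro a; simp [dotp, chi_zero]
    rw [Finset.sum_congr rfl (fun a _ => this a), Finset.sum_const]
    simp [Fintype.card_pi]
  · rw [if_neg hx]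
    obtain ⟨j, hj⟩ : ∃ j, x j ≠ 0 := by
      by_contra h; push_neg at h; exact hx (funext h)
    have hj1 : x j = 1 := zmod2_eq_one hj
    have key : ∑ a : Fin m → ZMod 2, chi (dotp a x)
        = ∑ a : Fin m → ZMod 2, chi (dotp (a + Pi.single j 1) x) :=
      (Fintype.sum_equiv (Equiv.addRight (Pi.single j 1)) _ _ (fun a => rfl)).symm
    have h2 : ∀ a : Fin m → ZMod 2, chi (dotp (a + Pi.single j 1) x) = - chi (dotp a x) := by
      intro a
      rw [dotp_add_left, dotp_single, hj1, chi_add, chi_one]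
      ring
    rw [Finset.sum_congr rfl (fun a _ => h2 a), Finset.sum_neg_distrib] at key
    linarith

lemma pi_add_eq_zero {x y : Fin m → ZMod 2} : x + y = 0 ↔ x = y := by
  constructor
  · intro h; funext k
    exact zmod2_add_eq_zero.mp (congrFun h k)
  · rintro rfl; funext k; exact zmod2_add_self (x k)

def aff (p : (Fin m → ZMod 2) × ZMod 2) (x : Fin m → ZMod 2) : ZMod 2 := dotp p.1 x + p.2

noncomputable def Ff (ε : ZMod 2) (x : Fin m → ZMod 2) (p : (Fin m → ZMod 2) × ZMod 2) : ℝ :=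
  (1 + chi (ε + aff p x)) / 2

lemma sumP_one : ∑ _p : (Fin m → ZMod 2) × ZMod 2, (1:ℝ) = 2 * 2^m := by
  rw [Finset.sum_const]
  simp [Fintype.card_prod, Fintype.card_pi]
  ring

lemma sumP_chi_aff (c : ZMod 2) (x : Fin m → ZMod 2) :
    ∑ p : (Fin m → ZMod 2) × ZMod 2, chi (c + aff p x) = 0 := by
  rw [Fintype.sum_prod_type]
  have : ∀ a : Fin m → ZMod 2, ∀ b : ZMod 2, chi (c + aff (a, b) x)
      = chi (c + dotp a x) * chi b := by
    intro a b
    rw [← chi_add]; congr 1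
    simp [aff]; ring
  simp only [this, ← Finset.mul_sum, sum_chi, mul_zero, Finset.sum_const_zero]

lemma sumP_chi_dotp (c : ZMod 2) (z : Fin m → ZMod 2) :
    ∑ p : (Fin m → ZMod 2) × ZMod 2, chi (c + dotp p.1 z)
      = 2 * chi c * (if z = 0 then (2:ℝ)^m else 0) := by
  rw [Fintype.sum_prod_type]
  have : ∀ a : Fin m → ZMod 2, ∑ _b : ZMod 2, chi (c + dotp a z) = 2 * (chi c * chi (dotp a z)) := by
    intro a
    rw [Finset.sum_const, ← chi_add]
    simp [ZMod.card]
  rw [Finset.sum_congr rfl (fun a _ => this a), ← Finset.mul_sum, ← Finset.mul_sum,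
    sum_chi_dotp]
  ring

lemma B1 (ε : ZMod 2) (x : Fin m → ZMod 2) :
    ∑ p : (Fin m → ZMod 2) × ZMod 2, Ff ε x p = (2:ℝ)^m := by
  have : ∀ p : (Fin m → ZMod 2) × ZMod 2, Ff ε x p = 1/2 + chi (ε + aff p x) / 2 := by
    intro p; rw [Ff]; ring
  rw [Finset.sum_congr rfl (fun p _ => this p), Finset.sum_add_distrib, ← Finset.sum_div,
    ← Finset.sum_div, sumP_one, sumP_chi_aff]
  ring

lemma B2 (ε δ : ZMod 2) (x y : Fin m → ZMod 2) :
    ∑ p : (Fin m → ZMod 2) × ZMod 2, Ff ε x p * Ff δ y p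
      = (2:ℝ)^m / 4 * (2 + 2 * (chi (ε + δ) * (if x = y then 1 else 0))) := by
  have key : ∀ p : (Fin m → ZMod 2) × ZMod 2, Ff ε x p * Ff δ y p
      = 1/4 + chi (ε + aff p x) / 4 + chi (δ + aff p y) / 4
        + chi ((ε + δ) + dotp p.1 (x + y)) / 4 := by
    intro p
    have hAB : chi (ε + aff p x) * chi (δ + aff p y)
        = chi ((ε + δ) + dotp p.1 (x + y)) := by
      rw [← chi_add]; congr 1
      rw [aff, aff, dotp_add_right]
      linear_combination (zmod2_add_self p.2)
    rw [Ff, Ff, div_mul_div_comm]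
    rw [show (1 + chi (ε + aff p x)) * (1 + chi (δ + aff p y))
        = 1 + chi (ε + aff p x) + chi (δ + aff p y)
          + chi (ε + aff p x) * chi (δ + aff p y) from by ring, hAB]
    ring
  rw [Finset.sum_congr rfl (fun p _ => key p)]
  rw [Finset.sum_add_distrib, Finset.sum_add_distrib, Finset.sum_add_distrib]
  rw [← Finset.sum_div, ← Finset.sum_div, ← Finset.sum_div, ← Finset.sum_div,
    sumP_one, sumP_chi_aff, sumP_chi_aff, sumP_chi_dotp]
  by_cases h : x = y <;> simp [pi_add_eq_zero, h] <;> ring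

lemma B3 (ε δ γ : ZMod 2) (x y z : Fin m → ZMod 2) :
    ∑ p : (Fin m → ZMod 2) × ZMod 2, Ff ε x p * Ff δ y p * Ff γ z p
      = (2:ℝ)^m / 8 * (2 + 2 * (chi (ε + δ) * (if x = y then 1 else 0))
          + 2 * (chi (ε + γ) * (if x = z then 1 else 0))
          + 2 * (chi (δ + γ) * (if y = z then 1 else 0))) := by
  have key : ∀ p : (Fin m → ZMod 2) × ZMod 2, Ff ε x p * Ff δ y p * Ff γ z p
      = 1/8 + chi (ε + aff p x) / 8 + chi (δ + aff p y) / 8 + chi (γ + aff p z) / 8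
        + chi ((ε + δ) + dotp p.1 (x + y)) / 8
        + chi ((ε + γ) + dotp p.1 (x + z)) / 8
        + chi ((δ + γ) + dotp p.1 (y + z)) / 8
        + chi ((ε + δ + γ) + aff p (x + y + z)) / 8 := by
    intro p
    have hxy : chi (ε + aff p x) * chi (δ + aff p y)
        = chi ((ε + δ) + dotp p.1 (x + y)) := by
      rw [← chi_add]; congr 1
      rw [aff, aff, dotp_add_right]
      linear_combination (zmod2_add_self p.2)
    have hxz : chi (ε + aff p x) * chi (γ + aff p z)
        = chi ((ε + γ) + dotp p.1 (x + z)) := by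
      rw [← chi_add]; congr 1
      rw [aff, aff, dotp_add_right]
      linear_combination (zmod2_add_self p.2)
    have hyz : chi (δ + aff p y) * chi (γ + aff p z)
        = chi ((δ + γ) + dotp p.1 (y + z)) := by
      rw [← chi_add]; congr 1
      rw [aff, aff, dotp_add_right]
      linear_combination (zmod2_add_self p.2)
    have hxyz : chi (ε + aff p x) * chi (δ + aff p y) * chi (γ + aff p z)
        = chi ((ε + δ + γ) + aff p (x + y + z)) := by
      rw [← chi_add, ← chi_add]; congr 1
      rw [aff, aff, aff, aff, dotp_add_right, dotp_add_right]
      linear_combination (zmod2_add_self p.2)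
    rw [Ff, Ff, Ff, div_mul_div_comm, div_mul_div_comm]
    rw [show (1 + chi (ε + aff p x)) * (1 + chi (δ + aff p y)) * (1 + chi (γ + aff p z))
        = 1 + chi (ε + aff p x) + chi (δ + aff p y) + chi (γ + aff p z)
          + chi (ε + aff p x) * chi (δ + aff p y)
          + chi (ε + aff p x) * chi (γ + aff p z)
          + chi (δ + aff p y) * chi (γ + aff p z)
          + chi (ε + aff p x) * chi (δ + aff p y) * chi (γ + aff p z) from by ring,
      hxyz, hxy, hxz, hyz]
    ring
  rw [Finset.sum_congr rfl (fun p _ => key p)]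
  simp only [Finset.sum_add_distrib, ← Finset.sum_div]
  rw [sumP_one, sumP_chi_aff, sumP_chi_aff, sumP_chi_aff, sumP_chi_aff,
    sumP_chi_dotp, sumP_chi_dotp, sumP_chi_dotp]
  have exy : ((x + y = 0) ↔ (x = y)) := pi_add_eq_zero
  have exz : ((x + z = 0) ↔ (x = z)) := pi_add_eq_zero
  have eyz : ((y + z = 0) ↔ (y = z)) := pi_add_eq_zero
  by_cases h1 : x = y <;> by_cases h2 : x = z <;> by_cases h3 : y = z <;>
    simp_all [pi_add_eq_zero] <;> ring

lemma cardV : Fintype.card (Fin m → ZMod 2) = 2^m := by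
  simp [ZMod.card]

variable {t : ℕ}

noncomputable def agr (v : Fin t → (Fin m → ZMod 2) → ZMod 2)
    (P : Fin t → (Fin m → ZMod 2) × ZMod 2) (x : Fin m → ZMod 2) : ℝ :=
  ∏ i, Ff (v i x) x (P i)

lemma M1 (v : Fin t → (Fin m → ZMod 2) → ZMod 2) :
    ∑ P : Fin t → (Fin m → ZMod 2) × ZMod 2, ∑ x, agr v P x
      = 2^m * (((2:ℝ)^m)^t) := by
  rw [Finset.sum_comm]
  have h : ∀ x : Fin m → ZMod 2,
      ∑ P : Fin t → (Fin m → ZMod 2) × ZMod 2, agr v P x = ((2:ℝ)^m)^t := by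
    intro x
    unfold agr
    rw [← Fintype.prod_sum]
    simp only [B1]
    simp
  rw [Finset.sum_congr rfl (fun x _ => h x), Finset.sum_const, Finset.card_univ, cardV,
    nsmul_eq_mul]
  push_cast
  ring

lemma B2v (v : Fin t → (Fin m → ZMod 2) → ZMod 2) (i : Fin t) (x y : Fin m → ZMod 2) :
    ∑ p : (Fin m → ZMod 2) × ZMod 2, Ff (v i x) x p * Ff (v i y) y p
      = (if x = y then (2:ℝ)^m else 2^m/2) := by
  rw [B2]
  by_cases h : x = y
  · subst h; rw [zmod2_add_self, chi_zero]; simp; ring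
  · simp [h]; ring

lemma M2 (v : Fin t → (Fin m → ZMod 2) → ZMod 2) :
    ∑ P : Fin t → (Fin m → ZMod 2) × ZMod 2, (∑ x, agr v P x)^2
      = 2^m * (((2:ℝ)^m)^t) + 2^m * (2^m - 1) * (((2:ℝ)^m/2)^t) := by
  have expand : ∀ P : Fin t → (Fin m → ZMod 2) × ZMod 2,
      (∑ x, agr v P x)^2 = ∑ x, ∑ y, agr v P x * agr v P y := by
    intro P; rw [sq, Finset.sum_mul_sum]
  rw [Finset.sum_congr rfl (fun P _ => expand P), Finset.sum_comm]
  have h1 : ∀ x : Fin m → ZMod 2,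
      ∑ P : Fin t → (Fin m → ZMod 2) × ZMod 2, ∑ y, agr v P x * agr v P y
        = ∑ y, ∑ P : Fin t → (Fin m → ZMod 2) × ZMod 2, agr v P x * agr v P y := fun x =>
    Finset.sum_comm
  rw [Finset.sum_congr rfl (fun x _ => h1 x)]
  have h2 : ∀ x y : Fin m → ZMod 2,
      ∑ P : Fin t → (Fin m → ZMod 2) × ZMod 2, agr v P x * agr v P y
        = (if x = y then (2:ℝ)^m else 2^m/2)^t := by
    intro x y
    have : ∀ P : Fin t → (Fin m → ZMod 2) × ZMod 2, agr v P x * agr v P y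
        = ∏ i, (Ff (v i x) x (P i) * Ff (v i y) y (P i)) := by
      intro P; rw [agr, agr, ← Finset.prod_mul_distrib]
    rw [Finset.sum_congr rfl (fun P _ => this P),
      ← Fintype.prod_sum (fun i (p : (Fin m → ZMod 2) × ZMod 2) =>
        Ff (v i x) x p * Ff (v i y) y p)]
    simp only [B2v]
    simp
    rw [div_pow]
  have h3 : ∀ x : Fin m → ZMod 2,
      ∑ y, (if x = y then (2:ℝ)^m else 2^m/2)^t
        = ((2:ℝ)^m)^t + (2^m - 1) * (((2:ℝ)^m/2)^t) := by
    intro x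
    have : ∀ y : Fin m → ZMod 2, (if x = y then (2:ℝ)^m else 2^m/2)^t
        = ((2:ℝ)^m/2)^t + (if x = y then ((2:ℝ)^m)^t - ((2:ℝ)^m/2)^t else 0) := by
      intro y; by_cases h : x = y <;> simp [h]
    rw [Finset.sum_congr rfl (fun y _ => this y), Finset.sum_add_distrib,
      Finset.sum_const, Finset.sum_ite_eq, Finset.card_univ, cardV, nsmul_eq_mul]
    push_cast
    simp
    ring
  calc ∑ x : Fin m → ZMod 2, ∑ y : Fin m → ZMod 2,
        ∑ P : Fin t → (Fin m → ZMod 2) × ZMod 2, agr v P x * agr v P y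
      = ∑ x : Fin m → ZMod 2, (((2:ℝ)^m)^t + (2^m - 1) * (((2:ℝ)^m/2)^t)) := by
        refine Finset.sum_congr rfl (fun x _ => ?_)
        rw [Finset.sum_congr rfl (fun y _ => h2 x y), h3]
    _ = 2^m * (((2:ℝ)^m)^t) + 2^m * (2^m - 1) * (((2:ℝ)^m/2)^t) := by
        rw [Finset.sum_const, Finset.card_univ, cardV, nsmul_eq_mul]; push_cast; ring

noncomputable def W3 (x y z : Fin m → ZMod 2) : ℝ :=
  2^m/4 * (1 + (if x = y then (1:ℝ) else 0) + (if x = z then (1:ℝ) else 0)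
    + (if y = z then (1:ℝ) else 0))

lemma B3v (v : Fin t → (Fin m → ZMod 2) → ZMod 2) (i : Fin t) (x y z : Fin m → ZMod 2) :
    ∑ p : (Fin m → ZMod 2) × ZMod 2,
        Ff (v i x) x p * Ff (v i y) y p * Ff (v i z) z p = W3 x y z := by
  rw [B3]
  by_cases h1 : x = y <;> by_cases h2 : x = z <;> by_cases h3 : y = z <;>
    simp_all [W3, zmod2_add_self, chi_zero] <;> ring

lemma sum_ite_pow (A B : ℝ) (x : Fin m → ZMod 2) :
    ∑ y : Fin m → ZMod 2, (if x = y then A else B) = A + ((2:ℝ)^m - 1) * B := by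
  have h : ∀ y : Fin m → ZMod 2, (if x = y then A else B)
      = B + (if x = y then A - B else 0) := by
    intro y; by_cases h : x = y <;> simp [h]
  rw [Finset.sum_congr rfl (fun y _ => h y), Finset.sum_add_distrib, Finset.sum_const,
    Finset.sum_ite_eq, Finset.card_univ, cardV, nsmul_eq_mul]
  push_cast
  simp
  ring

lemma M3 (v : Fin t → (Fin m → ZMod 2) → ZMod 2) :
    ∑ P : Fin t → (Fin m → ZMod 2) × ZMod 2, (∑ x, agr v P x)^3
      = 2^m * (((2:ℝ)^m)^t) + 3 * 2^m * (2^m - 1) * (((2:ℝ)^m/2)^t)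
        + 2^m * (2^m - 1) * (2^m - 2) * (((2:ℝ)^m/4)^t) := by
  have expand : ∀ P : Fin t → (Fin m → ZMod 2) × ZMod 2,
      (∑ x, agr v P x)^3 = ∑ x, ∑ y, ∑ z, agr v P x * agr v P y * agr v P z := by
    intro P
    rw [pow_succ, sq, Finset.sum_mul_sum, Finset.sum_mul]
    refine Finset.sum_congr rfl fun x _ => ?_
    rw [Finset.sum_mul]
    refine Finset.sum_congr rfl fun y _ => ?_
    rw [Finset.mul_sum]
  rw [Finset.sum_congr rfl (fun P _ => expand P), Finset.sum_comm]
  have swap1 : ∀ x : Fin m → ZMod 2,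
      ∑ P : Fin t → (Fin m → ZMod 2) × ZMod 2, ∑ y, ∑ z,
          agr v P x * agr v P y * agr v P z
        = ∑ y, ∑ z, ∑ P : Fin t → (Fin m → ZMod 2) × ZMod 2,
            agr v P x * agr v P y * agr v P z := by
    intro x
    rw [Finset.sum_comm]
    exact Finset.sum_congr rfl fun y _ => Finset.sum_comm
  rw [Finset.sum_congr rfl (fun x _ => swap1 x)]
  have hP : ∀ x y z : Fin m → ZMod 2,
      ∑ P : Fin t → (Fin m → ZMod 2) × ZMod 2, agr v P x * agr v P y * agr v P z
        = (W3 x y z)^t := by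
    intro x y z
    have h : ∀ P : Fin t → (Fin m → ZMod 2) × ZMod 2, agr v P x * agr v P y * agr v P z
        = ∏ i, (Ff (v i x) x (P i) * Ff (v i y) y (P i) * Ff (v i z) z (P i)) := by
      intro P
      rw [agr, agr, agr, ← Finset.prod_mul_distrib, ← Finset.prod_mul_distrib]
    rw [Finset.sum_congr rfl (fun P _ => h P),
      ← Fintype.prod_sum (fun i (p : (Fin m → ZMod 2) × ZMod 2) =>
        Ff (v i x) x p * Ff (v i y) y p * Ff (v i z) z p)]
    simp only [B3v]
    simp
  have hz1 : ∀ x : Fin m → ZMod 2,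
      ∑ z, (W3 x x z)^t = ((2:ℝ)^m)^t + (2^m - 1) * (((2:ℝ)^m/2)^t) := by
    intro x
    have h : ∀ z : Fin m → ZMod 2, (W3 x x z)^t
        = if x = z then (((2:ℝ)^m)^t) else (((2:ℝ)^m/2)^t) := by
      intro z; by_cases h : x = z <;> simp [W3, h] <;> ring_nf
    rw [Finset.sum_congr rfl (fun z _ => h z), sum_ite_pow]
  have hz2 : ∀ x y : Fin m → ZMod 2, x ≠ y →
      ∑ z, (W3 x y z)^t
        = 2^m * (((2:ℝ)^m/4)^t) + 2 * ((((2:ℝ)^m/2)^t) - (((2:ℝ)^m/4)^t)) := by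
    intro x y hxy
    have h : ∀ z : Fin m → ZMod 2, (W3 x y z)^t
        = ((2:ℝ)^m/4)^t + (if x = z then (((2:ℝ)^m/2)^t) - (((2:ℝ)^m/4)^t) else 0)
          + (if y = z then (((2:ℝ)^m/2)^t) - (((2:ℝ)^m/4)^t) else 0) := by
      intro z
      by_cases h2 : x = z <;> by_cases h3 : y = z
      · exact absurd (h2.trans h3.symm) hxy
      · subst h2
        rw [if_pos rfl, if_neg (fun hh : y = x => hxy hh.symm)]
        rw [show W3 x y x = 2^m/2 from by
          rw [W3, if_neg hxy, if_pos rfl, if_neg (fun hh : y = x => hxy hh.symm)]; ring]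
        ring
      · subst h3
        rw [if_neg hxy, if_pos rfl]
        rw [show W3 x y y = 2^m/2 from by
          rw [W3, if_neg hxy, if_pos rfl]; ring]
        ring
      · rw [if_neg h2, if_neg h3]
        rw [show W3 x y z = 2^m/4 from by
          rw [W3, if_neg hxy, if_neg h2, if_neg h3]; ring]
        ring
    rw [Finset.sum_congr rfl (fun z _ => h z), Finset.sum_add_distrib,
      Finset.sum_add_distrib, Finset.sum_const, Finset.sum_ite_eq, Finset.sum_ite_eq,
      Finset.card_univ, cardV, nsmul_eq_mul]
    push_cast
    simp
    ring
  have hy : ∀ x : Fin m → ZMod 2,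
      ∑ y, ∑ z, ∑ P : Fin t → (Fin m → ZMod 2) × ZMod 2,
          agr v P x * agr v P y * agr v P z
        = (((2:ℝ)^m)^t + (2^m - 1) * (((2:ℝ)^m/2)^t))
          + ((2:ℝ)^m - 1) * (2^m * (((2:ℝ)^m/4)^t)
            + 2 * ((((2:ℝ)^m/2)^t) - (((2:ℝ)^m/4)^t))) := by
    intro x
    have h : ∀ y : Fin m → ZMod 2,
        ∑ z, ∑ P : Fin t → (Fin m → ZMod 2) × ZMod 2,
            agr v P x * agr v P y * agr v P z
          = if x = y then (((2:ℝ)^m)^t + (2^m - 1) * (((2:ℝ)^m/2)^t))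
            else (2^m * (((2:ℝ)^m/4)^t) + 2 * ((((2:ℝ)^m/2)^t) - (((2:ℝ)^m/4)^t))) := by
      intro y
      rw [Finset.sum_congr rfl (fun z _ => hP x y z)]
      by_cases h : x = y
      · subst h; rw [hz1, if_pos rfl]
      · rw [hz2 x y h, if_neg h]
    rw [Finset.sum_congr rfl (fun y _ => h y), sum_ite_pow]
  rw [Finset.sum_congr rfl (fun x _ => hy x), Finset.sum_const, Finset.card_univ, cardV,
    nsmul_eq_mul]
  push_cast
  ring

lemma Ff_ite (ε : ZMod 2) (x : Fin m → ZMod 2) (p : (Fin m → ZMod 2) × ZMod 2) :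
    Ff ε x p = if ε = aff p x then 1 else 0 := by
  rw [Ff]
  by_cases h : ε = aff p x
  · rw [if_pos h, ← h, zmod2_add_self, chi_zero]; norm_num
  · rw [if_neg h]
    have : ε + aff p x ≠ 0 := fun hc => h (zmod2_add_eq_zero.mp hc)
    rw [chi, if_neg this]; norm_num

lemma agr_ite (v : Fin t → (Fin m → ZMod 2) → ZMod 2)
    (P : Fin t → (Fin m → ZMod 2) × ZMod 2) (x : Fin m → ZMod 2) :
    agr v P x = if (∀ i, v i x = aff (P i) x) then 1 else 0 := by
  unfold agr
  by_cases h : ∀ i, v i x = aff (P i) x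
  · rw [if_pos h]
    exact Finset.prod_eq_one fun i _ => by rw [Ff_ite, if_pos (h i)]
  · rw [if_neg h]
    push_neg at h
    obtain ⟨i, hi⟩ := h
    exact Finset.prod_eq_zero (Finset.mem_univ i) (by rw [Ff_ite, if_neg hi])

open Classical in
noncomputable def AgCard {ι F : Type*} [Fintype ι] {t : ℕ} (v c : Fin t → ι → F) : ℕ :=
  (Finset.univ.filter fun x : ι => ∀ i, v i x = c i x).card

lemma AgCard_cast (v : Fin t → (Fin m → ZMod 2) → ZMod 2)
    (P : Fin t → (Fin m → ZMod 2) × ZMod 2) :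
    (AgCard v (fun i => aff (P i)) : ℝ) = ∑ x, agr v P x := by
  rw [AgCard, Finset.card_filter]
  push_cast
  refine Finset.sum_congr rfl fun x _ => ?_
  rw [agr_ite]

open Classical in
lemma AgCard_le {ι F : Type*} [Fintype ι] {t : ℕ} (v c : Fin t → ι → F) :
    AgCard v c ≤ Fintype.card ι := by
  rw [AgCard, ← Finset.card_univ]
  exact Finset.card_filter_le _ _

open Classical in
lemma dist_card {ι F : Type*} [Fintype ι] [AddGroup F] {t : ℕ} (v c : Fin t → ι → F) :
    genCovDist v c = Fintype.card ι - AgCard v c := by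
  rw [genCovDist, tWeight]
  have e1 : (Finset.univ.filter fun j : ι =>
        ∃ i, (v - c) i j ≠ (0 : F))
      = (Finset.univ.filter fun x : ι => ∀ i, v i x = c i x)ᶜ := by
    ext j
    simp only [Finset.mem_filter, Finset.mem_univ, true_and, Finset.mem_compl]
    constructor
    · rintro ⟨i, hi⟩ hall
      exact hi (by simp [sub_eq_zero, hall i])
    · intro h
      by_contra hc
      push_neg at hc
      exact h fun i => by have := hc i; simpa [sub_eq_zero] using this
  rw [e1, Finset.card_compl, AgCard]

lemma aff_mem (p : (Fin m → ZMod 2) × ZMod 2) : aff p ∈ RM 1 m := by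
  refine ⟨(∑ k, MvPolynomial.C (p.1 k) * MvPolynomial.X k) + MvPolynomial.C p.2, ?_, ?_⟩
  · refine le_trans (MvPolynomial.totalDegree_add _ _) (max_le ?_ ?_)
    · refine le_trans (MvPolynomial.totalDegree_finset_sum _ _) (Finset.sup_le fun k _ => ?_)
      refine le_trans (MvPolynomial.totalDegree_mul _ _) ?_
      rw [MvPolynomial.totalDegree_C]
      simp [MvPolynomial.totalDegree_X]
    · simp [MvPolynomial.totalDegree_C]
  · intro x
    simp [aff, dotp]

lemma key_exists (ht : 1 ≤ t) (v : Fin t → (Fin m → ZMod 2) → ZMod 2) :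
    ∃ P : Fin t → (Fin m → ZMod 2) × ZMod 2,
      (2:ℝ)^m + Real.sqrt (((2:ℝ)^t - 1) * 2^m) ≤ 2^t * ∑ x, agr v P x := by
  have hq2 : (2:ℝ) ≤ 2^t := by
    calc (2:ℝ) = 2^1 := (pow_one 2).symm
    _ ≤ 2^t := by exact pow_le_pow_right₀ one_le_two ht
  have hn1 : (1:ℝ) ≤ 2^m := one_le_pow₀ one_le_two
  have hs2 : (0:ℝ) ≤ ((2:ℝ)^t - 1) * 2^m := by nlinarith
  set s := Real.sqrt (((2:ℝ)^t - 1) * 2^m) with hs_def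
  have hss : s^2 = ((2:ℝ)^t - 1) * 2^m := Real.sq_sqrt hs2
  have hs0 : 0 < s := Real.sqrt_pos.mpr (by nlinarith)
  have hcardP : ((Finset.univ : Finset (Fin t → (Fin m → ZMod 2) × ZMod 2)).card : ℝ)
      = (2:ℝ)^t * ((2:ℝ)^m)^t := by
    rw [Finset.card_univ]
    simp only [Fintype.card_pi, Fintype.card_prod, cardV, ZMod.card,
      Finset.prod_const, Finset.card_univ, Fintype.card_fin]
    push_cast
    rw [← mul_pow]
    ring
  by_contra hcon
  push_neg at hcon
  have key2 : ∑ P : Fin t → (Fin m → ZMod 2) × ZMod 2,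
      ((2:ℝ)^t * (∑ x, agr v P x) - 2^m - s) * ((2:ℝ)^t * (∑ x, agr v P x) - 2^m + s)^2
      = ((2:ℝ)^t * ((2:ℝ)^m)^t) * 2^m * ((2:ℝ)^t - 1) * ((2:ℝ)^t - 2) := by
    have pt : ∀ P : Fin t → (Fin m → ZMod 2) × ZMod 2,
        ((2:ℝ)^t * (∑ x, agr v P x) - 2^m - s) * ((2:ℝ)^t * (∑ x, agr v P x) - 2^m + s)^2
        = ((2:ℝ)^t)^3 * (∑ x, agr v P x)^3
          + ((s - 3*2^m) * ((2:ℝ)^t)^2) * (∑ x, agr v P x)^2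
          + ((3*((2:ℝ)^m)^2 - 2*2^m*s - s^2) * (2:ℝ)^t) * (∑ x, agr v P x)
          + (((2:ℝ)^m)^2*s + 2^m*s^2 - ((2:ℝ)^m)^3 - s^3) := by
      intro P; ring
    rw [Finset.sum_congr rfl (fun P _ => pt P), Finset.sum_add_distrib,
      Finset.sum_add_distrib, Finset.sum_add_distrib,
      ← Finset.mul_sum, ← Finset.mul_sum, ← Finset.mul_sum,
      M1, M2, M3, Finset.sum_const, nsmul_eq_mul, hcardP]
    rw [div_pow, div_pow, show ((4:ℝ))^t = 2^t * 2^t from by rw [← mul_pow]; norm_num,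
      show (s:ℝ)^3 = s * (((2:ℝ)^t - 1) * 2^m) from by rw [pow_succ, sq, ← sq, hss]; ring,
      hss]
    have h2t : (0:ℝ) < 2^t := by positivity
    field_simp
    ring
  have hle : ∑ P : Fin t → (Fin m → ZMod 2) × ZMod 2,
      ((2:ℝ)^t * (∑ x, agr v P x) - 2^m - s) * ((2:ℝ)^t * (∑ x, agr v P x) - 2^m + s)^2
      ≤ 0 := by
    refine Finset.sum_nonpos fun P _ => ?_
    have h1 := hcon P
    nlinarith [sq_nonneg ((2:ℝ)^t * (∑ x, agr v P x) - 2^m + s)]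
  have hge : 0 ≤ ((2:ℝ)^t * ((2:ℝ)^m)^t) * 2^m * ((2:ℝ)^t - 1) * ((2:ℝ)^t - 2) := by
    have h1 : (0:ℝ) ≤ (2:ℝ)^t * ((2:ℝ)^m)^t := by positivity
    have h2 : (0:ℝ) ≤ (2:ℝ)^m := by positivity
    exact mul_nonneg (mul_nonneg (mul_nonneg h1 h2) (by linarith)) (by linarith)
  have hzero : ∑ P : Fin t → (Fin m → ZMod 2) × ZMod 2,
      ((2:ℝ)^t * (∑ x, agr v P x) - 2^m - s) * ((2:ℝ)^t * (∑ x, agr v P x) - 2^m + s)^2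
      = 0 := le_antisymm hle (key2 ▸ hge)
  have each := (Finset.sum_eq_zero_iff_of_nonpos (fun P _ => by
    have h1 := hcon P
    nlinarith [sq_nonneg ((2:ℝ)^t * (∑ x, agr v P x) - 2^m + s)])).mp hzero
  have hval : ∀ P : Fin t → (Fin m → ZMod 2) × ZMod 2,
      (2:ℝ)^t * (∑ x, agr v P x) - 2^m = -s := by
    intro P
    have h0 := each P (Finset.mem_univ P)
    have h1 := hcon P
    rcases mul_eq_zero.mp h0 with h | h
    · nlinarith
    · have := pow_eq_zero_iff (n := 2) (by norm_num) |>.mp h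
      linarith
  have hsum0 : ∑ P : Fin t → (Fin m → ZMod 2) × ZMod 2,
      ((2:ℝ)^t * (∑ x, agr v P x) - 2^m) = 0 := by
    rw [Finset.sum_sub_distrib, ← Finset.mul_sum, M1, Finset.sum_const, nsmul_eq_mul, hcardP]
    ring
  rw [Finset.sum_congr rfl (fun P _ => hval P), Finset.sum_const, nsmul_eq_mul, hcardP]
    at hsum0
  have hNpos : (0:ℝ) < (2:ℝ)^t * ((2:ℝ)^m)^t := by positivity
  nlinarith

/-- R_t(1,m) ≤ (1 − 1/2^t)·2^m − (√(2^t − 1)/2^t)·2^{m/2}. -/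
theorem stmt12 (m t : ℕ) (hm : 1 ≤ m) :
    (genCovRadius (RM 1 m) t : ℝ) ≤
      (1 - 1 / 2 ^ t) * 2 ^ m
        - (Real.sqrt (2 ^ t - 1) / 2 ^ t) * (2 : ℝ) ^ ((m : ℝ) / 2) := by
  rcases Nat.eq_zero_or_pos t with ht0 | ht
  · subst ht0
    have h0 : 0 ∈ {r : ℕ | ∀ v : Fin 0 → (Fin m → ZMod 2) → ZMod 2,
        ∃ c : Fin 0 → (Fin m → ZMod 2) → ZMod 2,
          (∀ i, c i ∈ RM 1 m) ∧ genCovDist v c ≤ r} := by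
      intro v
      refine ⟨fun i => i.elim0, fun i => i.elim0, ?_⟩
      rw [genCovDist, tWeight]
      simp
    have hrad : genCovRadius (RM 1 m) 0 = 0 := Nat.le_zero.mp (Nat.sInf_le h0)
    rw [hrad]
    norm_num
  · have hq2 : (2:ℝ) ≤ 2^t := by
      calc (2:ℝ) = 2^1 := (pow_one 2).symm
      _ ≤ 2^t := by exact pow_le_pow_right₀ one_le_two ht
    have hq0 : (0:ℝ) < 2^t := by positivity
    have hn1 : (1:ℝ) ≤ 2^m := one_le_pow₀ one_le_two
    have h2half : (2:ℝ) ^ ((m:ℝ)/2) = Real.sqrt ((2:ℝ)^m) := by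
      rw [Real.sqrt_eq_rpow, ← Real.rpow_natCast (2:ℝ) m, ← Real.rpow_mul (by norm_num)]
      congr 1
      ring
    have hs_split : Real.sqrt (((2:ℝ)^t - 1) * 2^m)
        = Real.sqrt ((2:ℝ)^t - 1) * (2:ℝ) ^ ((m:ℝ)/2) := by
      rw [Real.sqrt_mul (by linarith), h2half]
    set rhs := (1 - 1 / (2:ℝ) ^ t) * 2 ^ m
        - (Real.sqrt ((2:ℝ) ^ t - 1) / 2 ^ t) * (2 : ℝ) ^ ((m : ℝ) / 2) with hrhs_def
    have hrhs_eq : rhs = 2^m - (2^m + Real.sqrt (((2:ℝ)^t - 1) * 2^m)) / 2^t := by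
      rw [hrhs_def, hs_split]
      field_simp
      ring
    have hX1 : (1:ℝ) ≤ ((2:ℝ)^t - 1) * 2^m := by nlinarith
    have hSle : Real.sqrt (((2:ℝ)^t - 1) * 2^m) ≤ ((2:ℝ)^t - 1) * 2^m := by
      calc Real.sqrt (((2:ℝ)^t - 1) * 2^m)
          ≤ Real.sqrt ((((2:ℝ)^t - 1) * 2^m)^2) := Real.sqrt_le_sqrt (by nlinarith)
        _ = ((2:ℝ)^t - 1) * 2^m := Real.sqrt_sq (by linarith)
    have hrhs0 : (0:ℝ) ≤ rhs := by
      rw [hrhs_eq, sub_nonneg, div_le_iff₀ hq0]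
      nlinarith
    have hmem : Nat.floor rhs ∈ {r : ℕ | ∀ v : Fin t → (Fin m → ZMod 2) → ZMod 2,
        ∃ c : Fin t → (Fin m → ZMod 2) → ZMod 2,
          (∀ i, c i ∈ RM 1 m) ∧ genCovDist v c ≤ r} := by
      intro v
      obtain ⟨P, hP⟩ := key_exists ht v
      refine ⟨fun i => aff (P i), fun i => aff_mem (P i), ?_⟩
      refine Nat.le_floor ?_
      have hcast : (genCovDist v (fun i => aff (P i)) : ℝ)
          = 2^m - ∑ x, agr v P x := by
        rw [dist_card v (fun i => aff (P i)),
          Nat.cast_sub (AgCard_le v (fun i => aff (P i))), AgCard_cast, cardV]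
        push_cast
        ring
      rw [hcast, hrhs_eq]
      have hdiv : (2^m + Real.sqrt (((2:ℝ)^t - 1) * 2^m)) / 2^t ≤ ∑ x, agr v P x := by
        rw [div_le_iff₀ hq0]
        calc (2:ℝ)^m + Real.sqrt (((2:ℝ)^t - 1) * 2^m)
            ≤ 2^t * ∑ x, agr v P x := hP
          _ = (∑ x, agr v P x) * 2^t := by ring
      linarith
    have hfin : genCovRadius (RM 1 m) t ≤ Nat.floor rhs := Nat.sInf_le hmem
    calc (genCovRadius (RM 1 m) t : ℝ) ≤ (Nat.floor rhs : ℝ) := Nat.cast_le.mpr hfin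
      _ ≤ rhs := Nat.floor_le hrhs0
end

section
/- For all m ∈ ℕ and 2 ≤ r ≤ m−1 (with r ≥ 2 and m ≥ 3), the sum ∑_{i=2}^{m−1} (√2)^i equals (1+√2)·2^{m/2} − 2/(√2−1), and consequently R_t(2,m) ≤ (1 − 1/2^t)·2^m − (√(2^t−1)/2^t)·((1+√2)·2^{m/2} − 2/(√2−1)), where R_t(2,m) is the t-th generalized covering radius of RM(2,m). -/
open Finset

noncomputable def sgn (a : ZMod 2) : ℝ := if a = 0 then 1 else -1

lemma zmod2_cases (a : ZMod 2) : a = 0 ∨ a = 1 := by revert a; decide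

lemma sgn_add (a b : ZMod 2) : sgn (a + b) = sgn a * sgn b := by
  rcases zmod2_cases a with h | h <;> rcases zmod2_cases b with h' | h' <;>
    subst h <;> subst h' <;>
    simp [sgn, show ((1 : ZMod 2) + 1) = 0 from by decide]

lemma sgn_sq (a : ZMod 2) : sgn a * sgn a = 1 := by
  rcases zmod2_cases a with h | h <;> subst h <;> simp [sgn]

lemma sgn_one : sgn 1 = -1 := by simp [sgn]

lemma sgn_zero : sgn 0 = 1 := by simp [sgn]

def dot {n : ℕ} (u x : Fin n → ZMod 2) : ZMod 2 := ∑ j, u j * x j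

lemma orth {n : ℕ} (z : Fin n → ZMod 2) (hz : z ≠ 0) :
    ∑ u : Fin n → ZMod 2, sgn (dot u z) = 0 := by
  obtain ⟨j0, hj0⟩ : ∃ j, z j ≠ 0 := by
    by_contra h
    push_neg at h
    exact hz (funext h)
  have hz1 : z j0 = 1 := ((zmod2_cases _).resolve_left hj0)
  apply Finset.sum_ninvolution (fun u => Function.update u j0 (u j0 + 1))
  · intro u
    have hd : dot (Function.update u j0 (u j0 + 1)) z = dot u z + 1 := by
      unfold dot
      rw [Finset.sum_eq_sum_sdiff_singleton_add (Finset.mem_univ j0),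
          Finset.sum_eq_sum_sdiff_singleton_add (Finset.mem_univ j0)
            (fun j => u j * z j)]
      have he : ∑ j ∈ Finset.univ \ {j0}, Function.update u j0 (u j0 + 1) j * z j
          = ∑ j ∈ Finset.univ \ {j0}, u j * z j := by
        apply Finset.sum_congr rfl
        intro j hj
        simp only [Finset.mem_sdiff, Finset.mem_singleton] at hj
        rw [Function.update_of_ne hj.2]
      rw [he, Function.update_self, hz1]
      ring
    rw [hd, sgn_add, sgn_one]
    ring
  · intro u _ h
    have := congrFun h j0
    rw [Function.update_self] at this
    exact (by decide : ∀ a : ZMod 2, ¬ (a + 1 = a)) _ this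
  · intro u; exact Finset.mem_univ _
  · intro u
    funext j
    by_cases hj : j = j0
    · subst hj; simp only [Function.update_self]
      have : ∀ a : ZMod 2, a + 1 + 1 = a := by decide
      rw [this]
    · simp [Function.update_of_ne hj]

lemma dot_add_right {n : ℕ} (u x y : Fin n → ZMod 2) :
    dot u (x + y) = dot u x + dot u y := by
  unfold dot
  rw [← Finset.sum_add_distrib]
  exact Finset.sum_congr rfl fun j _ => by rw [Pi.add_apply, mul_add]

lemma card_fun_space (n : ℕ) : Fintype.card (Fin n → ZMod 2) = 2 ^ n := by
  simp [Fintype.card_fun]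

lemma parseval {n : ℕ} (G : Finset (Fin n → ZMod 2)) (w : (Fin n → ZMod 2) → ZMod 2) :
    ∑ u : Fin n → ZMod 2, (∑ x ∈ G, sgn (w x + dot u x)) ^ 2
      = 2 ^ n * G.card := by
  have key : ∀ u : Fin n → ZMod 2, (∑ x ∈ G, sgn (w x + dot u x)) ^ 2
      = ∑ x ∈ G, ∑ y ∈ G, sgn (w x + w y) * sgn (dot u (x + y)) := by
    intro u
    rw [sq, Finset.sum_mul_sum]
    refine Finset.sum_congr rfl fun x _ => Finset.sum_congr rfl fun y _ => ?_
    rw [sgn_add, sgn_add, sgn_add, dot_add_right, sgn_add]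
    ring
  simp_rw [key]
  rw [Finset.sum_comm]
  have inner : ∀ x ∈ G, ∑ u : Fin n → ZMod 2, ∑ y ∈ G,
      sgn (w x + w y) * sgn (dot u (x + y)) = 2 ^ n := by
    intro x hx
    rw [Finset.sum_comm]
    have pt : ∀ y ∈ G, ∑ u : Fin n → ZMod 2, sgn (w x + w y) * sgn (dot u (x + y))
        = if y = x then (2 : ℝ) ^ n else 0 := by
      intro y hy
      rw [← Finset.mul_sum]
      by_cases hxy : y = x
      · subst hxy
        have h0 : y + y = 0 := by
          funext j; rw [Pi.add_apply]
          exact (by decide : ∀ a : ZMod 2, a + a = 0) _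
        have hw : w y + w y = 0 := (by decide : ∀ a : ZMod 2, a + a = 0) _
        rw [h0, hw, sgn_zero, one_mul]
        have hd : ∀ u : Fin n → ZMod 2, dot u (0 : Fin n → ZMod 2) = 0 := by
          intro u; unfold dot; simp
        simp_rw [hd, sgn_zero]
        rw [Finset.sum_const, Finset.card_univ, card_fun_space]
        simp
      · have hne : x + y ≠ 0 := by
          intro h
          apply hxy
          funext j
          have h0 : x j + y j = 0 := by simpa using congrFun h j
          exact ((by decide : ∀ a b : ZMod 2, a + b = 0 → a = b) _ _ h0).symm
        rw [orth _ hne, mul_zero]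
        simp [hxy]
    rw [Finset.sum_congr rfl pt]
    simp [Finset.sum_ite_eq', hx]
  rw [Finset.sum_congr rfl inner, Finset.sum_const, nsmul_eq_mul]
  ring

open MvPolynomial in
lemma lin_approx {n : ℕ} (G : Finset (Fin n → ZMod 2)) (w : (Fin n → ZMod 2) → ZMod 2) :
    ∃ c : (Fin n → ZMod 2) → ZMod 2,
      (∃ p : MvPolynomial (Fin n) (ZMod 2), p.totalDegree ≤ 1 ∧
        ∀ x, MvPolynomial.eval x p = c x) ∧
      ((G.filter fun x => w x ≠ c x).card : ℝ)
        ≤ ((G.card : ℝ) - Real.sqrt G.card) / 2 := by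
  classical
  obtain ⟨u, -, hu⟩ : ∃ u ∈ Finset.univ, (G.card : ℝ) ≤ (∑ x ∈ G, sgn (w x + dot u x)) ^ 2 := by
    apply Finset.exists_le_of_sum_le ⟨0, Finset.mem_univ 0⟩
    rw [parseval G w, Finset.sum_const, Finset.card_univ, card_fun_space, nsmul_eq_mul]
    push_cast
    exact le_of_eq (by ring)
  set S := ∑ x ∈ G, sgn (w x + dot u x) with hS
  have habs : Real.sqrt G.card ≤ |S| := by
    have := Real.sqrt_le_sqrt hu
    rwa [Real.sqrt_sq_eq_abs] at this
  -- choose the constant term to fix the sign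
  obtain ⟨e, he⟩ : ∃ e : ZMod 2, Real.sqrt G.card ≤ ∑ x ∈ G, sgn (w x + (dot u x + e)) := by
    rcases le_or_gt 0 S with h | h
    · refine ⟨0, ?_⟩
      simp only [add_zero]
      rw [abs_of_nonneg h] at habs
      exact habs
    · refine ⟨1, ?_⟩
      have : ∑ x ∈ G, sgn (w x + (dot u x + 1)) = -S := by
        rw [hS, ← Finset.sum_neg_distrib]
        apply Finset.sum_congr rfl
        intro x _
        rw [← add_assoc, sgn_add, sgn_one]
        ring
      rw [this]
      rw [abs_of_neg h] at habs
      exact habs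
  obtain ⟨c, hc⟩ : ∃ c : (Fin n → ZMod 2) → ZMod 2, c = fun x => dot u x + e := ⟨_, rfl⟩
  refine ⟨c, ⟨C e + ∑ j : Fin n, C (u j) * X j, ?_, ?_⟩, ?_⟩
  · apply le_trans (totalDegree_add _ _)
    apply max_le
    · simp [totalDegree_C]
    · apply le_trans (totalDegree_finset_sum _ _)
      apply Finset.sup_le
      intro j _
      calc (C (u j) * X j).totalDegree ≤ (C (u j)).totalDegree + (X j).totalDegree :=
            totalDegree_mul _ _
        _ ≤ 1 := by simp [totalDegree_C, totalDegree_X]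
  · intro x
    rw [hc]
    simp only [map_add, eval_C, map_sum, eval_mul, eval_X]
    rw [add_comm]
    rfl
  · -- counting
    have key : ∀ x ∈ G, sgn (w x + c x) = if w x = c x then (1:ℝ) else -1 := by
      intro x _
      by_cases h : w x = c x
      · have : w x + c x = 0 := by
          rw [h]; exact (by decide : ∀ a : ZMod 2, a + a = 0) _
        rw [this, sgn_zero]; simp [h]
      · have : w x + c x ≠ 0 := by
          intro h0
          exact h ((by decide : ∀ a b : ZMod 2, a + b = 0 → a = b) _ _ h0)
        simp [sgn, this, h]
    have hsum : ∑ x ∈ G, sgn (w x + c x)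
        = (G.card : ℝ) - 2 * (G.filter fun x => w x ≠ c x).card := by
      rw [Finset.sum_congr rfl key, Finset.sum_ite, Finset.sum_const, Finset.sum_const]
      have hcards : (G.filter fun x => w x = c x).card
          + (G.filter fun x => ¬ (w x = c x)).card = G.card :=
        Finset.card_filter_add_card_filter_not _
      have : (G.filter fun x => w x = c x).card
          = G.card - (G.filter fun x => ¬ (w x = c x)).card := by omega
      rw [this]
      have hle : (G.filter fun x => ¬ (w x = c x)).card ≤ G.card := by omega
      simp only [nsmul_eq_mul, mul_one, mul_neg_one, ne_eq]
      rw [Nat.cast_sub hle]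
      ring
    have he' : Real.sqrt G.card ≤ ∑ x ∈ G, sgn (w x + c x) := by
      rw [hc]; exact he
    rw [hsum] at he'
    linarith

noncomputable def beta (t n : ℕ) : ℝ :=
  (1 - (1/2)^t) * 2^n - Real.sqrt (2^t - 1) * Real.sqrt (2^n) / 2^t

lemma beta_zero (n : ℕ) : beta 0 n = 0 := by
  unfold beta; norm_num

lemma beta_nonneg (t n : ℕ) : 0 ≤ beta t n := by
  cases t with
  | zero => rw [beta_zero]
  | succ t' =>
    unfold beta
    set a := Real.sqrt (2^(t'+1) - 1) with ha
    set r := Real.sqrt (2^n) with hr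
    have h1 : (1:ℝ) ≤ 2^(t'+1) - 1 := by
      have : (2:ℝ) ≤ 2^(t'+1) := by
        calc (2:ℝ) = 2^1 := (pow_one 2).symm
        _ ≤ 2^(t'+1) := by
          apply pow_le_pow_right₀ (by norm_num) (by omega)
      linarith
    have h2 : (1:ℝ) ≤ 2^n := one_le_pow₀ (by norm_num)
    have ha2 : a^2 = 2^(t'+1) - 1 := Real.sq_sqrt (by linarith)
    have hr2 : r^2 = 2^n := Real.sq_sqrt (by linarith)
    have ha1 : 1 ≤ a := Real.le_sqrt_of_sq_le (by linarith [h1])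
    have hr1 : 1 ≤ r := Real.le_sqrt_of_sq_le (by linarith [h2])
    have key : a * r ≤ (2^(t'+1) - 1) * 2^n := by
      have haa : a ≤ a^2 := by nlinarith
      have hrr : r ≤ r^2 := by nlinarith
      calc a * r ≤ a^2 * r := mul_le_mul_of_nonneg_right haa (by linarith)
      _ ≤ a^2 * r^2 := mul_le_mul_of_nonneg_left hrr (by positivity)
      _ = _ := by rw [ha2, hr2]
    have hP : (0:ℝ) < 2^(t'+1) := by positivity
    rw [sub_nonneg, div_le_iff₀ hP]
    calc a * r ≤ (2^(t'+1) - 1) * 2^n := key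
    _ = (1 - (1/2)^(t'+1)) * 2^n * 2^(t'+1) := by
        field_simp
        rw [one_div_pow, mul_sub, mul_one, mul_one_div_cancel hP.ne']
  
lemma beta_rec (t n : ℕ) :
    ((2:ℝ)^n + beta t n)/2 - Real.sqrt ((2:ℝ)^n - beta t n)/2 ≤ beta (t+1) n := by
  have hP : (0:ℝ) < 2^t := by positivity
  have hN : (0:ℝ) ≤ 2^n := by positivity
  set r := Real.sqrt ((2:ℝ)^n) with hrdef
  set a := Real.sqrt ((2:ℝ)^t - 1) with hadef
  set s := Real.sqrt ((2:ℝ)^t) with hsdef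
  have ha0 : 0 ≤ a := Real.sqrt_nonneg _
  have hr0 : 0 ≤ r := Real.sqrt_nonneg _
  have hs0 : 0 < s := Real.sqrt_pos.2 hP
  have h1t : (1:ℝ) ≤ 2^t := one_le_pow₀ (by norm_num)
  have ha2 : a^2 = 2^t - 1 := Real.sq_sqrt (by linarith)
  have hs2 : s^2 = 2^t := Real.sq_sqrt hP.le
  have hr2 : r^2 = 2^n := Real.sq_sqrt hN
  have hbeta : beta t n = (1 - (1/2)^t) * 2^n - a * r / 2^t := rfl
  -- lower bound for the square root
  have h1 : r/s ≤ Real.sqrt ((2:ℝ)^n - beta t n) := by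
    apply Real.le_sqrt_of_sq_le
    have e1 : (r/s)^2 = 2^n/2^t := by rw [div_pow, hr2, hs2]
    rw [e1, hbeta]
    have hh : (0:ℝ) ≤ a * r / 2^t := by positivity
    have e2 : (2:ℝ)^n - ((1 - (1/2)^t) * 2^n - a * r / 2^t)
        = 2^n/2^t + a*r/2^t := by
      field_simp
      rw [one_div_pow, mul_assoc, sub_mul, one_mul, one_div_mul_cancel hP.ne']
      ring
    rw [e2]
    linarith
  -- upper bound for sqrt (2^(t+1) - 1)
  have h2 : Real.sqrt ((2:ℝ)^(t+1) - 1) ≤ a + s := by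
    have : ((2:ℝ)^(t+1) - 1) ≤ (a + s)^2 := by
      have : (a+s)^2 = a^2 + 2*a*s + s^2 := by ring
      rw [this, ha2, hs2]
      have : (0:ℝ) ≤ 2*a*s := by positivity
      have e : (2:ℝ)^(t+1) = 2^t + 2^t := by ring
      linarith
    calc Real.sqrt ((2:ℝ)^(t+1) - 1) ≤ Real.sqrt ((a+s)^2) := Real.sqrt_le_sqrt this
    _ = a + s := Real.sqrt_sq (by positivity)
  have hbeta1 : beta (t+1) n = (1 - (1/2)^(t+1)) * 2^n - Real.sqrt ((2:ℝ)^(t+1) - 1) * r / 2^(t+1) := rfl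
  rw [hbeta1, hbeta]
  have h3 : Real.sqrt ((2:ℝ)^(t+1) - 1) * r / 2^(t+1) ≤ (a+s) * r / 2^(t+1) := by
    gcongr

  -- main algebra
  have h4 : ((2:ℝ)^n + ((1 - (1/2)^t) * 2^n - a * r / 2^t))/2 - (r/s)/2
      = (1 - (1/2)^(t+1)) * 2^n - (a+s) * r / 2^(t+1) := by
    have hss : s * s = 2^t := by nlinarith [hs2]
    have hrs : r / s = s * r / 2^t := by
      rw [div_eq_div_iff hs0.ne' hP.ne']
      nlinarith [hss]
    rw [hrs]
    field_simp
    ring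
  have h5 : Real.sqrt ((2:ℝ)^n - beta t n) ≥ r/s := h1
  calc ((2:ℝ)^n + ((1 - (1/2)^t) * 2^n - a * r / 2^t))/2 - Real.sqrt ((2:ℝ)^n - beta t n)/2
      ≤ ((2:ℝ)^n + ((1 - (1/2)^t) * 2^n - a * r / 2^t))/2 - (r/s)/2 := by
        rw [hbeta] at h5
        linarith
    _ = (1 - (1/2)^(t+1)) * 2^n - (a+s) * r / 2^(t+1) := h4
    _ ≤ (1 - (1/2)^(t+1)) * 2^n - Real.sqrt ((2:ℝ)^(t+1) - 1) * r / 2^(t+1) := by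
        linarith

open Classical in
lemma cov1 (n : ℕ) : ∀ (t : ℕ) (v : Fin t → (Fin n → ZMod 2) → ZMod 2),
    ∃ c : Fin t → (Fin n → ZMod 2) → ZMod 2,
      (∀ i, ∃ p : MvPolynomial (Fin n) (ZMod 2), p.totalDegree ≤ 1 ∧
        ∀ x, MvPolynomial.eval x p = c i x) ∧
      ((Finset.univ.filter fun x : Fin n → ZMod 2 => ∃ i, v i x ≠ c i x).card : ℝ)
        ≤ beta t n := by
  intro t
  induction t with
  | zero =>
    intro v
    refine ⟨fun i => i.elim0, fun i => i.elim0, ?_⟩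
    rw [beta_zero]
    simp
  | succ t ih =>
    intro v
    obtain ⟨c', hpoly', hcard'⟩ := ih (fun i => v i.succ)
    set B' := Finset.univ.filter fun x : Fin n → ZMod 2 => ∃ i, v i.succ x ≠ c' i x with hB'
    set G := Finset.univ.filter
      (fun x : Fin n → ZMod 2 => ¬ ∃ i, v i.succ x ≠ c' i x) with hG
    obtain ⟨c0, hp0, hc0⟩ := lin_approx G (v 0)
    refine ⟨Fin.cases c0 c', ?_, ?_⟩
    · intro i
      refine Fin.cases ?_ ?_ i
      · simpa using hp0
      · intro j
        simpa using hpoly' j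
    · have hsub : (Finset.univ.filter
          fun x : Fin n → ZMod 2 => ∃ i, v i x ≠ Fin.cases c0 c' i x)
          ⊆ B' ∪ G.filter (fun x => v 0 x ≠ c0 x) := by
        intro x hx
        simp only [Finset.mem_filter, Finset.mem_univ, true_and] at hx
        obtain ⟨i, hi⟩ := hx
        rcases Fin.eq_zero_or_eq_succ i with rfl | ⟨j, rfl⟩
        · by_cases hB : x ∈ B'
          · exact Finset.mem_union_left _ hB
          · apply Finset.mem_union_right
            rw [Finset.mem_filter]
            refine ⟨?_, by simpa using hi⟩
            rw [hG, Finset.mem_filter]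
            refine ⟨Finset.mem_univ _, ?_⟩
            intro hex
            apply hB
            rw [hB', Finset.mem_filter]
            exact ⟨Finset.mem_univ _, hex⟩
        · apply Finset.mem_union_left
          rw [hB', Finset.mem_filter]
          exact ⟨Finset.mem_univ _, ⟨j, by simpa using hi⟩⟩
      have hcardle : ((Finset.univ.filter
          fun x : Fin n → ZMod 2 => ∃ i, v i x ≠ Fin.cases c0 c' i x).card : ℝ)
          ≤ (B'.card : ℝ) + ((G.filter fun x => v 0 x ≠ c0 x).card : ℝ) := by
        have h1 := Finset.card_le_card hsub
        have h2 := Finset.card_union_le B' (G.filter (fun x => v 0 x ≠ c0 x))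
        have := le_trans h1 h2
        exact_mod_cast this
      -- |G| = 2^n - |B'|
      have hGcompl : G = Finset.univ \ B' := by
        rw [hG, hB', Finset.filter_not]
      have hBle : B'.card ≤ 2^n := by
        calc B'.card ≤ Finset.univ.card := Finset.card_le_card (Finset.subset_univ _)
        _ = 2^n := by rw [Finset.card_univ, card_fun_space]
      have hGcard : (G.card : ℝ) = 2^n - B'.card := by
        rw [hGcompl, Finset.card_sdiff_of_subset (Finset.subset_univ _), Finset.card_univ,
          card_fun_space, Nat.cast_sub hBle]
        push_cast
        ring
      set b : ℝ := (B'.card : ℝ) with hb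
      have hb0 : 0 ≤ b := Nat.cast_nonneg _
      have hbb : b ≤ beta t n := hcard'
      have hNb : (2:ℝ)^n - beta t n ≤ (2:ℝ)^n - b := by linarith
      have hmono : Real.sqrt ((2:ℝ)^n - beta t n) ≤ Real.sqrt ((2:ℝ)^n - b) :=
        Real.sqrt_le_sqrt hNb
      calc ((Finset.univ.filter
          fun x : Fin n → ZMod 2 => ∃ i, v i x ≠ Fin.cases c0 c' i x).card : ℝ)
          ≤ b + ((G.card : ℝ) - Real.sqrt G.card) / 2 := by
            have := hc0
            linarith [hcardle, hc0]
        _ = ((2:ℝ)^n + b)/2 - Real.sqrt ((2:ℝ)^n - b)/2 := by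
            rw [hGcard]
            ring
        _ ≤ ((2:ℝ)^n + beta t n)/2 - Real.sqrt ((2:ℝ)^n - beta t n)/2 := by
            linarith [hmono, hbb]
        _ ≤ beta (t+1) n := beta_rec t n

open MvPolynomial in
lemma interp (n : ℕ) (f : (Fin n → ZMod 2) → ZMod 2) :
    ∃ p : MvPolynomial (Fin n) (ZMod 2), p.totalDegree ≤ n ∧
      ∀ x, MvPolynomial.eval x p = f x := by
  classical
  refine ⟨∑ a : Fin n → ZMod 2, C (f a) * ∏ j : Fin n, (X j + C (a j + 1)), ?_, ?_⟩
  · apply le_trans (totalDegree_finset_sum _ _)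
    apply Finset.sup_le
    intro a _
    calc (C (f a) * ∏ j : Fin n, (X j + C (a j + 1))).totalDegree
        ≤ (C (f a)).totalDegree + (∏ j : Fin n, (X j + C (a j + 1))).totalDegree :=
          totalDegree_mul _ _
      _ ≤ 0 + ∑ j : Fin n, (X j + C (a j + 1) : MvPolynomial (Fin n) (ZMod 2)).totalDegree := by
          rw [totalDegree_C]
          exact add_le_add_right (totalDegree_finset_prod _ _) 0
      _ ≤ 0 + ∑ j : Fin n, 1 := by
          apply add_le_add_right
          apply Finset.sum_le_sum
          intro j _
          apply le_trans (totalDegree_add _ _)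
          apply max_le
          · exact le_of_eq (totalDegree_X _)
          · rw [totalDegree_C]; omega
      _ = n := by simp
  · intro x
    rw [map_sum]
    have key : ∀ a : Fin n → ZMod 2,
        MvPolynomial.eval x (C (f a) * ∏ j : Fin n, (X j + C (a j + 1)))
        = f a * (if a = x then 1 else 0) := by
      intro a
      rw [eval_mul, eval_C, map_prod]
      congr 1
      by_cases hax : a = x
      · subst hax
        rw [if_pos rfl]
        apply Finset.prod_eq_one
        intro j _
        rw [eval_add, eval_X, eval_C]
        exact (by decide : ∀ u : ZMod 2, u + (u + 1) = 1) _
      · rw [if_neg hax]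
        obtain ⟨j, hj⟩ : ∃ j, a j ≠ x j := by
          by_contra h
          push_neg at h
          exact hax (funext h)
        apply Finset.prod_eq_zero (Finset.mem_univ j)
        rw [eval_add, eval_X, eval_C]
        revert hj
        exact (by decide : ∀ u v : ZMod 2, v ≠ u → u + (v + 1) = 0) _ _
    rw [Finset.sum_congr rfl (fun a _ => key a)]
    simp

open Classical in
open MvPolynomial in
lemma cov2 : ∀ (k t : ℕ) (v : Fin t → (Fin (k+2) → ZMod 2) → ZMod 2),
    ∃ c : Fin t → (Fin (k+2) → ZMod 2) → ZMod 2,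
      (∀ i, c i ∈ RM 2 (k+2)) ∧
      ((Finset.univ.filter fun z : Fin (k+2) → ZMod 2 => ∃ i, v i z ≠ c i z).card : ℝ)
        ≤ ∑ j ∈ Finset.Ico 2 (k+2), beta t j := by
  intro k
  induction k with
  | zero =>
    intro t v
    refine ⟨v, ?_, ?_⟩
    · intro i
      obtain ⟨p, hdeg, heval⟩ := interp 2 (v i)
      exact ⟨p, hdeg, heval⟩
    · simp
  | succ k ih =>
    intro t v
    obtain ⟨q, hqRM, hqcard⟩ := ih t (fun i x => v i (Fin.snoc x 0))
    obtain ⟨l, hlpoly, hlcard⟩ := cov1 (k+2) t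
      (fun i x => v i (Fin.snoc x 1) - q i x)
    set c : Fin t → (Fin (k+3) → ZMod 2) → ZMod 2 :=
      fun i z => q i (Fin.init z) + z (Fin.last (k+2)) * l i (Fin.init z) with hc
    refine ⟨c, ?_, ?_⟩
    · intro i
      obtain ⟨pq, hpq, hpqe⟩ := hqRM i
      obtain ⟨pl, hpl, hple⟩ := hlpoly i
      refine ⟨rename Fin.castSucc pq + X (Fin.last (k+2)) * rename Fin.castSucc pl, ?_, ?_⟩
      · apply le_trans (totalDegree_add _ _)
        apply max_le
        · exact le_trans (totalDegree_rename_le _ _) hpq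
        · calc (X (Fin.last (k+2)) * rename Fin.castSucc pl).totalDegree
              ≤ (X (Fin.last (k+2)) :
                  MvPolynomial (Fin (k+3)) (ZMod 2)).totalDegree
                + (rename Fin.castSucc pl).totalDegree := totalDegree_mul _ _
          _ ≤ 1 + 1 := by
              apply add_le_add
              · exact le_of_eq (totalDegree_X _)
              · exact le_trans (totalDegree_rename_le _ _) hpl
          _ = 2 := rfl
      · intro z
        rw [eval_add, eval_mul, eval_X, eval_rename, eval_rename, hpqe, hple]
        rfl
    · -- counting
      have hqcard' : ((Finset.univ.filter
          (fun x : Fin (k+2) → ZMod 2 => ∃ i, v i (Fin.snoc x 0) ≠ q i x)).card : ℝ)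
          ≤ ∑ j ∈ Finset.Ico 2 (k+2), beta t j := by
        convert hqcard using 4
      have hlcard' : ((Finset.univ.filter
          (fun x : Fin (k+2) → ZMod 2 => ∃ i, v i (Fin.snoc x 1) - q i x ≠ l i x)).card : ℝ)
          ≤ beta t (k+2) := by
        convert hlcard using 4
      set E : Finset (Fin (k+2) → ZMod 2) :=
        Finset.univ.filter (fun x => ∃ i, v i (Fin.snoc x 0) ≠ q i x) with hE
      set D : Finset (Fin (k+2) → ZMod 2) :=
        Finset.univ.filter (fun x => ∃ i, v i (Fin.snoc x 1) - q i x ≠ l i x) with hD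
      have hsub : (Finset.univ.filter
          fun z : Fin (k+3) → ZMod 2 => ∃ i, v i z ≠ c i z)
          ⊆ E.image (fun x => Fin.snoc x 0) ∪ D.image (fun x => Fin.snoc x 1) := by
        intro z hz
        simp only [Finset.mem_filter, Finset.mem_univ, true_and] at hz
        obtain ⟨i, hi⟩ := hz
        have hzsnoc : Fin.snoc (Fin.init z) (z (Fin.last (k+2))) = z :=
          Fin.snoc_init_self z
        rcases (by decide : ∀ a : ZMod 2, a = 0 ∨ a = 1) (z (Fin.last (k+2))) with h0 | h1
        · apply Finset.mem_union_left
          rw [Finset.mem_image]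
          refine ⟨Fin.init z, ?_, by rw [← h0]; exact hzsnoc⟩
          rw [hE, Finset.mem_filter]
          refine ⟨Finset.mem_univ _, i, ?_⟩
          have hcz : c i z = q i (Fin.init z) := by
            simp only [hc]
            rw [h0, zero_mul, add_zero]
          have hvz : v i z = v i (Fin.snoc (Fin.init z) 0) := by
            rw [← h0, hzsnoc]
          rw [← hvz, ← hcz]
          exact hi
        · apply Finset.mem_union_right
          rw [Finset.mem_image]
          refine ⟨Fin.init z, ?_, by rw [← h1]; exact hzsnoc⟩
          rw [hD, Finset.mem_filter]
          refine ⟨Finset.mem_univ _, i, ?_⟩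
          have hcz : c i z = q i (Fin.init z) + l i (Fin.init z) := by
            simp only [hc]
            rw [h1, one_mul]
          have hvz : v i z = v i (Fin.snoc (Fin.init z) 1) := by
            rw [← h1, hzsnoc]
          intro hcon
          apply hi
          rw [hvz, hcz, ← hcon]
          ring
      have h1 := Finset.card_le_card hsub
      have h2 := Finset.card_union_le
        (E.image (fun x => (Fin.snoc x (0 : ZMod 2) : Fin (k+3) → ZMod 2)))
        (D.image (fun x => (Fin.snoc x (1 : ZMod 2) : Fin (k+3) → ZMod 2)))
      have h3 := Finset.card_image_le (s := E)
        (f := fun x => (Fin.snoc x (0 : ZMod 2) : Fin (k+3) → ZMod 2))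
      have h4 := Finset.card_image_le (s := D)
        (f := fun x => (Fin.snoc x (1 : ZMod 2) : Fin (k+3) → ZMod 2))
      have hn : (Finset.univ.filter
          fun z : Fin (k+3) → ZMod 2 => ∃ i, v i z ≠ c i z).card ≤ E.card + D.card := by
        omega
      have hr : ((Finset.univ.filter
          fun z : Fin (k+3) → ZMod 2 => ∃ i, v i z ≠ c i z).card : ℝ)
          ≤ (E.card : ℝ) + (D.card : ℝ) := by
        exact_mod_cast hn
      refine le_trans hr (le_trans (add_le_add hqcard' hlcard') (le_of_eq ?_))
      exact (Finset.sum_Ico_succ_top (by omega : 2 ≤ k+2) _).symm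

open Classical in
lemma dist_eq {m t : ℕ} (v c : Fin t → (Fin m → ZMod 2) → ZMod 2) :
    genCovDist v c = (Finset.univ.filter fun z : Fin m → ZMod 2 => ∃ i, v i z ≠ c i z).card := by
  unfold genCovDist tWeight
  refine congrArg Finset.card (Finset.ext fun z => ?_)
  simp [sub_ne_zero]

lemma sqrt_two_pow (j : ℕ) : Real.sqrt ((2:ℝ)^j) = (Real.sqrt 2)^j := by
  have h : ((Real.sqrt 2)^j)^2 = (2:ℝ)^j := by
    rw [← pow_mul, mul_comm, pow_mul, Real.sq_sqrt (by norm_num : (0:ℝ) ≤ 2)]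
  rw [← h, Real.sqrt_sq (by positivity)]

lemma pow_half (m : ℕ) : (2:ℝ) ^ ((m:ℝ)/2) = (Real.sqrt 2)^m := by
  rw [show (m:ℝ)/2 = (m:ℝ) * (1/2) by ring, Real.rpow_mul (by norm_num : (0:ℝ) ≤ 2),
      Real.rpow_natCast, ← Real.sqrt_eq_rpow, sqrt_two_pow]

lemma one_lt_sqrt_two : (1:ℝ) < Real.sqrt 2 := by
  have := Real.sqrt_lt_sqrt (by norm_num : (0:ℝ) ≤ 1) (by norm_num : (1:ℝ) < 2)
  simpa using this

/-- ∑_{i=2}^{m−1}(√2)^i = (1+√2)·2^{m/2} − 2/(√2−1), and consequently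
R_t(2,m) ≤ (1 − 1/2^t)·2^m − (√(2^t−1)/2^t)·((1+√2)·2^{m/2} − 2/(√2−1)). -/
theorem stmt16 (m t : ℕ) (hm : 3 ≤ m) :
    (∑ i ∈ Finset.Icc 2 (m - 1), (Real.sqrt 2) ^ i
        = (1 + Real.sqrt 2) * (2 : ℝ) ^ ((m : ℝ) / 2) - 2 / (Real.sqrt 2 - 1)) ∧
    (genCovRadius (RM 2 m) t : ℝ) ≤
      (1 - 1 / 2 ^ t) * 2 ^ m
        - (Real.sqrt (2 ^ t - 1) / 2 ^ t)
            * ((1 + Real.sqrt 2) * (2 : ℝ) ^ ((m : ℝ) / 2) - 2 / (Real.sqrt 2 - 1)) := by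
  classical
  obtain ⟨k, rfl⟩ : ∃ k, m = k + 2 := ⟨m - 2, by omega⟩
  have hk : 1 ≤ k := by omega
  set r : ℝ := Real.sqrt 2 with hrdef
  have hr1 : 1 < r := one_lt_sqrt_two
  have hrne : r ≠ 1 := ne_of_gt hr1
  have hrne' : r - 1 ≠ 0 := by intro h; apply hrne; linarith
  have hr2 : r^2 = 2 := Real.sq_sqrt (by norm_num)
  have hIccIco : Finset.Icc 2 (k + 2 - 1) = Finset.Ico 2 (k+2) := by
    rw [show k + 2 - 1 = k + 1 from rfl, ← Finset.Ico_add_one_right_eq_Icc]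
    rfl
  -- geometric sums
  have hsplit : ∀ x : ℝ, ∑ i ∈ Finset.Ico 0 2, x^i + ∑ i ∈ Finset.Ico 2 (k+2), x^i
      = ∑ i ∈ Finset.Ico 0 (k+2), x^i := fun x =>
    Finset.sum_Ico_consecutive _ (by omega) (by omega)
  have hfull : ∀ x : ℝ, x ≠ 1 → ∑ i ∈ Finset.Ico 0 (k+2), x^i = (x^(k+2) - 1)/(x - 1) := by
    intro x hx
    rw [← Finset.range_eq_Ico]
    exact geom_sum_eq hx _
  have hlow : ∀ x : ℝ, ∑ i ∈ Finset.Ico 0 2, x^i = 1 + x := by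
    intro x
    rw [← Finset.range_eq_Ico, Finset.sum_range_succ, Finset.sum_range_succ]
    simp
  have hgeo : ∀ x : ℝ, x ≠ 1 → ∑ i ∈ Finset.Ico 2 (k+2), x^i
      = (x^(k+2) - 1)/(x - 1) - (1 + x) := by
    intro x hx
    have := hsplit x
    rw [hfull x hx] at this
    rw [hlow x] at this
    linarith
  -- part 1
  have part1 : ∑ i ∈ Finset.Icc 2 (k + 2 - 1), r ^ i
      = (1 + r) * (2 : ℝ) ^ (((k+2 : ℕ) : ℝ) / 2) - 2 / (r - 1) := by
    rw [hIccIco, hgeo r hrne, pow_half]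
    field_simp
    linear_combination (r^(k+2) - 1 - 2*r^2*r^k) * hr2
  refine ⟨part1, ?_⟩
  -- part 2
  have hgeo2 : ∑ j ∈ Finset.Ico 2 (k+2), (2:ℝ)^j = 2^(k+2) - 4 := by
    rw [hgeo 2 (by norm_num)]
    norm_num
    ring
  set a : ℝ := Real.sqrt ((2:ℝ)^t - 1) with hadef
  have ha0 : 0 ≤ a := Real.sqrt_nonneg _
  set B : ℝ := ∑ j ∈ Finset.Ico 2 (k+2), beta t j with hBdef
  have hBeq : B = (1 - (1/2)^t) * (2^(k+2) - 4) - a * (∑ j ∈ Finset.Ico 2 (k+2), r^j) / 2^t := by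
    rw [hBdef]
    unfold beta
    rw [Finset.sum_sub_distrib, ← Finset.mul_sum, hgeo2]
    congr 1
    simp_rw [sqrt_two_pow, ← hrdef, ← hadef]
    rw [← Finset.sum_div, ← Finset.mul_sum]
  have hB0 : 0 ≤ B := Finset.sum_nonneg fun j _ => beta_nonneg t j
  -- covering radius ≤ floor B
  have hmem : ⌊B⌋₊ ∈ {n : ℕ | ∀ v : Fin t → (Fin (k+2) → ZMod 2) → ZMod 2,
      ∃ c, (∀ i, c i ∈ RM 2 (k+2)) ∧ genCovDist v c ≤ n} := by
    intro v
    obtain ⟨c, hcRM, hccard⟩ := cov2 k t v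
    refine ⟨c, hcRM, ?_⟩
    apply Nat.le_floor
    rw [dist_eq v c]
    exact le_trans (by exact_mod_cast hccard) (le_of_eq rfl)
  have hsinf : genCovRadius (RM 2 (k+2)) t ≤ ⌊B⌋₊ := Nat.sInf_le hmem
  have hcast : (genCovRadius (RM 2 (k+2)) t : ℝ) ≤ B :=
    le_trans (by exact_mod_cast hsinf) (Nat.floor_le hB0)
  refine le_trans hcast ?_
  -- B ≤ RHS
  have hT : ∑ j ∈ Finset.Ico 2 (k+2), r^j
      = (1 + r) * (2 : ℝ) ^ (((k+2 : ℕ) : ℝ) / 2) - 2 / (r - 1) := by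
    rw [← hIccIco]; exact part1
  rw [hBeq, hT]
  have hpow1 : (1:ℝ) ≤ 2^t := one_le_pow₀ (by norm_num)
  have h12 : ((1:ℝ)/2)^t = 1/2^t := by rw [div_pow, one_pow]
  rw [h12]
  have h4 : (0:ℝ) ≤ (1 - 1/(2:ℝ)^t) * 4 := by
    apply mul_nonneg ?_ (by norm_num)
    have : (1:ℝ)/2^t ≤ 1 := by
      rw [div_le_one (by positivity)]
      exact hpow1
    linarith
  have hdiv : a * ((1 + r) * (2 : ℝ) ^ (((k+2 : ℕ) : ℝ) / 2) - 2 / (r - 1)) / 2^t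
      = a / 2^t * ((1 + r) * (2 : ℝ) ^ (((k+2 : ℕ) : ℝ) / 2) - 2 / (r - 1)) := by
    ring
  rw [hdiv]
  have hexpand : (1 - 1/2^t) * ((2:ℝ)^(k+2) - 4)
      = (1 - 1/2^t) * (2:ℝ)^(k+2) - (1 - 1/2^t) * 4 := by ring
  rw [hexpand]
  apply sub_le_sub_right
  linarith
end
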